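/- arXiv:2112.05116 — 4 statements merged into one kernel-verified Lean document; each statement's English description precedes it below -/
import Mathlib

section
/- Let u ∈ BV(0,1) be the precise representative and z ∈ H¹₀(0,1) with |z| ≤ 1 everywhere such that |Du| = z·Du. If x₀ ∈ J_u is a jump point of u, then |z(x₀)| = 1; moreover z(x₀) = 1 if u⁺(x₀) > u⁻(x₀), and z(x₀) = -1 if u⁺(x₀) < u⁻(x₀). -/
open MeasureTheory Set Filter Topology

/-- Integral of `g` over `s` against a signed measure `ν`, via its Jordan decomposition. -/
noncomputable def signedSetIntegral (ν : SignedMeasure ℝ) (s : Set ℝ) (g : ℝ → ℝ) : ℝ :=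
  (∫ x in s, g x ∂ν.toJordanDecomposition.posPart) -
    ∫ x in s, g x ∂ν.toJordanDecomposition.negPart

/-- Let `u ∈ BV(0,1)` (precise representative) with derivative measure `ν = Du`,
and `z ∈ H¹₀(0,1)` continuous with `|z| ≤ 1` everywhere and `|Du| = z·Du`. If `x₀` is a jump
point of `u` with left limit `l = u⁻(x₀)` and right limit `r = u⁺(x₀)`, `l ≠ r`, then
`|z(x₀)| = 1`; moreover `z(x₀) = 1` if `r > l` and `z(x₀) = -1` if `r < l`. -/
theorem stmt5 (u z : ℝ → ℝ) (ν : SignedMeasure ℝ) (x₀ l r : ℝ)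
    (hx₀ : x₀ ∈ Ioo (0:ℝ) 1)
    (hu : BoundedVariationOn u (Ioo 0 1))
    (hν : ∀ φ : ℝ → ℝ, ContDiff ℝ 1 φ → HasCompactSupport φ → tsupport φ ⊆ Ioo 0 1 →
      ∫ x in Ioo (0:ℝ) 1, u x * deriv φ x = - signedSetIntegral ν (Ioo 0 1) φ)
    (hzc : Continuous z) (hz0 : z 0 = 0) (hz1 : z 1 = 0)
    (hzb : ∀ x, |z x| ≤ 1)
    (hzDu : ∀ s : Set ℝ, MeasurableSet s → s ⊆ Ioo 0 1 →
      (ν.totalVariation s).toReal = signedSetIntegral ν s z)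
    (hl : Tendsto u (𝓝[<] x₀) (𝓝 l)) (hr : Tendsto u (𝓝[>] x₀) (𝓝 r))
    (hlr : l ≠ r)
    (hjump : ν {x₀} = r - l) :
    |z x₀| = 1 ∧ (l < r → z x₀ = 1) ∧ (r < l → z x₀ = -1) := by
  set P := ν.toJordanDecomposition.posPart with hP
  set N := ν.toJordanDecomposition.negPart with hN
  have hmeas : MeasurableSet ({x₀} : Set ℝ) := measurableSet_singleton x₀
  have hsub : ({x₀} : Set ℝ) ⊆ Ioo 0 1 := by
    intro x hx; rw [mem_singleton_iff] at hx; subst hx; exact hx₀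
  -- finiteness of the parts on the singleton
  have hPfin : P {x₀} ≠ ⊤ := measure_ne_top _ _
  have hNfin : N {x₀} ≠ ⊤ := measure_ne_top _ _
  set p := (P {x₀}).toReal with hp
  set n := (N {x₀}).toReal with hn
  have hp0 : 0 ≤ p := ENNReal.toReal_nonneg
  have hn0 : 0 ≤ n := ENNReal.toReal_nonneg
  -- ν {x₀} = p - n
  have hνsing : ν {x₀} = p - n := by
    conv_lhs => rw [← ν.toSignedMeasure_toJordanDecomposition]
    rw [MeasureTheory.JordanDecomposition.toSignedMeasure]
    rw [MeasureTheory.Measure.toSignedMeasure_sub_apply hmeas]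
    rfl
  -- total variation on the singleton
  have htv : (ν.totalVariation {x₀}).toReal = p + n := by
    rw [MeasureTheory.SignedMeasure.totalVariation, Measure.add_apply,
      ENNReal.toReal_add hPfin hNfin]
  -- the pairing on the singleton
  have hint : signedSetIntegral ν {x₀} z = z x₀ * (p - n) := by
    rw [signedSetIntegral, integral_singleton, integral_singleton]
    simp [smul_eq_mul]; ring
    rw [show ν.toJordanDecomposition.posPart.real {x₀} = p from rfl,
      show ν.toJordanDecomposition.negPart.real {x₀} = n from rfl]; ring
  have key : p + n = z x₀ * (p - n) := by
    rw [← htv, ← hint]; exact hzDu {x₀} hmeas hsub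
  have hpn : p - n = r - l := by rw [← hνsing, hjump]
  have hne : p - n ≠ 0 := by rw [hpn]; exact sub_ne_zero.mpr (Ne.symm hlr)
  -- |z x₀ * (p - n)| ≤ |p - n| ≤ p + n
  have habs : |p - n| ≤ p + n := by
    rcases abs_cases (p - n) with ⟨h1, _⟩ | ⟨h1, _⟩ <;> rw [h1] <;> linarith
  have hge : p + n ≤ |p - n| := by
    calc p + n = z x₀ * (p - n) := key
      _ ≤ |z x₀ * (p - n)| := le_abs_self _
      _ = |z x₀| * |p - n| := abs_mul _ _
      _ ≤ 1 * |p - n| := by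
          apply mul_le_mul_of_nonneg_right (hzb x₀) (abs_nonneg _)
      _ = |p - n| := one_mul _
  have heq : p + n = |p - n| := le_antisymm hge habs
  have hzval : z x₀ * (p - n) = |p - n| := by rw [← key, heq]
  have habspos : 0 < |p - n| := abs_pos.mpr hne
  have hz : z x₀ = |p - n| / (p - n) := by
    field_simp at hzval ⊢; linarith [hzval]
  refine ⟨?_, ?_, ?_⟩
  · rw [hz, abs_div, abs_abs, div_self (abs_ne_zero.mpr hne)]
  · intro hlt
    have : 0 < p - n := by rw [hpn]; linarith
    rw [hz, abs_of_pos this, div_self (ne_of_gt this)]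
  · intro hlt
    have h' : p - n < 0 := by rw [hpn]; linarith
    rw [hz, abs_of_neg h', neg_div, div_self (ne_of_lt h')]
end

section
/- Let λ > 0, ε > 0, Ω = (0,1), and let (u, v₁, v₂) be a minimizer of the functional F_ε. If ε < 1/(4λ), then v₁ and v₂ are constant functions. -/
open scoped ENNReal NNReal
open MeasureTheory Set

/-- The augmented Lagrangian functional `F_ε` on `(0,1)`:
total variation of `u`, plus `(1/ε)` times the total variations of `v₁, v₂`, plus the
fidelity term `λ∫ u(v₁-f)² + (1-u)(v₂-f)²`, plus the convex indicator `∫ 𝕀_{[0,1]}(u)`. -/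
noncomputable def Feps1 (lam ε : ℝ) (f u v1 v2 : ℝ → ℝ) : ℝ≥0∞ :=
  eVariationOn u (Ioo 0 1)
    + ENNReal.ofReal (1 / ε) * (eVariationOn v1 (Ioo 0 1) + eVariationOn v2 (Ioo 0 1))
    + ENNReal.ofReal lam * ∫⁻ x in Ioo (0:ℝ) 1,
        ENNReal.ofReal (u x * (v1 x - f x) ^ 2 + (1 - u x) * (v2 x - f x) ^ 2)
    + ∫⁻ x in Ioo (0:ℝ) 1, (if u x ∈ Icc (0:ℝ) 1 then 0 else ⊤)

lemma clamp_lip (a b : ℝ) : |max 0 (min a 1) - max 0 (min b 1)| ≤ |a - b| := by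
  have h1 : |max 0 (min a 1) - max 0 (min b 1)| ≤ |min a 1 - min b 1| := by
    rw [max_comm 0 (min a 1), max_comm 0 (min b 1)]
    exact abs_max_sub_max_le_abs _ _ _
  have h2 : |min a 1 - min b 1| ≤ |a - b| := by
    have := abs_min_sub_min_le_max a 1 b 1
    simpa using this
  exact h1.trans h2

lemma real_key (uu vv ff m M : ℝ) (hu0 : 0 ≤ uu) (hu1 : uu ≤ 1) (hf0 : 0 ≤ ff) (hf1 : ff ≤ 1)
    (hm0 : 0 ≤ m) (hM1 : M ≤ 1) (hmM : m ≤ M)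
    (hwm : m ≤ max 0 (min vv 1)) (hwM : max 0 (min vv 1) ≤ M) :
    uu * ((m + M)/2 - ff)^2 ≤ uu * (vv - ff)^2 + (M - m) := by
  set w := max 0 (min vv 1) with hw
  have hsq : (w - ff)^2 ≤ (vv - ff)^2 := by
    have h1 : |w - ff| ≤ |vv - ff| := by
      have := clamp_lip vv ff
      rwa [show max 0 (min ff 1) = ff by rw [min_eq_left hf1, max_eq_right hf0]] at this
    calc (w - ff)^2 = |w - ff|^2 := (sq_abs _).symm
      _ ≤ |vv - ff|^2 := by nlinarith [abs_nonneg (w - ff)]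
      _ = (vv - ff)^2 := sq_abs _
  set c := (m + M)/2 with hc
  have hX : (c - ff)^2 - (w - ff)^2 ≤ M - m := by
    have e : (c - ff)^2 - (w - ff)^2 = (c - w) * (c + w - 2*ff) := by ring
    rw [e]
    nlinarith [mul_nonneg (sub_nonneg.2 hwM) (sub_nonneg.2 (by linarith : (c:ℝ) - w ≤ (M-m)/2)),
      sq_nonneg (c - w)]
  have h2 : uu * ((c - ff)^2 - (w - ff)^2) ≤ uu * (M - m) :=
    mul_le_mul_of_nonneg_left hX hu0
  have h3 : uu * (M - m) ≤ M - m := by nlinarith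
  have h4 : uu * (w - ff)^2 ≤ uu * (vv - ff)^2 := mul_le_mul_of_nonneg_left hsq hu0
  nlinarith

lemma slot_aux (lam ε : ℝ) (hlam : 0 < lam) (hε : 0 < ε) (hεsmall : ε < 1/(4*lam))
    (f g h v : ℝ → ℝ)
    (hf01 : ∀ᵐ x ∂(volume.restrict (Ioo (0:ℝ) 1)), f x ∈ Icc (0:ℝ) 1)
    (hg01 : ∀ᵐ x ∂(volume.restrict (Ioo (0:ℝ) 1)), g x ∈ Icc (0:ℝ) 1)
    (hVfin : eVariationOn v (Ioo 0 1) ≠ ⊤)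
    (hIfin : (∫⁻ x in Ioo (0:ℝ) 1, ENNReal.ofReal (g x * (v x - f x)^2 + h x)) ≠ ⊤)
    (hineq : ∀ c : ℝ,
      ENNReal.ofReal (1/ε) * eVariationOn v (Ioo 0 1)
        + ENNReal.ofReal lam * ∫⁻ x in Ioo (0:ℝ) 1, ENNReal.ofReal (g x * (v x - f x)^2 + h x)
      ≤ ENNReal.ofReal lam * ∫⁻ x in Ioo (0:ℝ) 1, ENNReal.ofReal (g x * (c - f x)^2 + h x)) :
    ∃ c : ℝ, ∀ x ∈ Ioo (0:ℝ) 1, v x = c := by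
  set V := eVariationOn v (Ioo (0:ℝ) 1) with hV
  set t := V.toReal with ht
  have ht0 : 0 ≤ t := ENNReal.toReal_nonneg
  set w : ℝ → ℝ := fun x => max 0 (min (v x) 1) with hwdef
  set S := w '' Ioo (0:ℝ) 1 with hS
  have hhalf : (1:ℝ)/2 ∈ Ioo (0:ℝ) 1 := by norm_num
  have hSne : S.Nonempty := ⟨w (1/2), mem_image_of_mem _ hhalf⟩
  have hSsub : ∀ y ∈ S, y ∈ Icc (0:ℝ) 1 := by
    rintro y ⟨x, -, rfl⟩
    exact ⟨le_max_left _ _, max_le (by norm_num) (min_le_right _ _)⟩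
  have hbddA : BddAbove S := ⟨1, fun y hy => (hSsub y hy).2⟩
  have hbddB : BddBelow S := ⟨0, fun y hy => (hSsub y hy).1⟩
  set M := sSup S with hM
  set m := sInf S with hm
  have hM1 : M ≤ 1 := csSup_le hSne fun y hy => (hSsub y hy).2
  have hm0 : 0 ≤ m := le_csInf hSne fun y hy => (hSsub y hy).1
  have hmM : m ≤ M := csInf_le_csSup hSne hbddB hbddA
  -- oscillation bounded by total variation
  have hdist : ∀ x ∈ Ioo (0:ℝ) 1, ∀ y ∈ Ioo (0:ℝ) 1, |w x - w y| ≤ t := by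
    intro x hx y hy
    have h1 : edist (v x) (v y) ≤ V := eVariationOn.edist_le v hx hy
    have h2 : dist (v x) (v y) ≤ t := by
      rw [dist_edist]
      exact ENNReal.toReal_mono hVfin h1
    rw [Real.dist_eq] at h2
    exact (clamp_lip (v x) (v y)).trans h2
  have hosc : M - m ≤ t := by
    have hMle : M ≤ m + t := by
      apply csSup_le hSne
      rintro y ⟨x, hx, rfl⟩
      have : w x - t ≤ m := by
        apply le_csInf hSne
        rintro z ⟨y', hy', rfl⟩
        have := hdist x hx y' hy'
        have := abs_le.1 this
        linarith [this.2]
      linarith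
    linarith
  set c := (m + M)/2 with hc
  -- integral comparison
  have hμuniv : (volume.restrict (Ioo (0:ℝ) 1)) univ = 1 := by
    rw [Measure.restrict_apply_univ, Real.volume_Ioo]
    norm_num
  have hIc : (∫⁻ x in Ioo (0:ℝ) 1, ENNReal.ofReal (g x * (c - f x)^2 + h x))
      ≤ (∫⁻ x in Ioo (0:ℝ) 1, ENNReal.ofReal (g x * (v x - f x)^2 + h x))
        + ENNReal.ofReal (M - m) := by
    have hptwise : ∀ᵐ x ∂(volume.restrict (Ioo (0:ℝ) 1)),
        ENNReal.ofReal (g x * (c - f x)^2 + h x)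
          ≤ ENNReal.ofReal (g x * (v x - f x)^2 + h x) + ENNReal.ofReal (M - m) := by
      filter_upwards [hf01, hg01, self_mem_ae_restrict measurableSet_Ioo] with x hf hg hxmem
      have hwS : w x ∈ S := mem_image_of_mem _ hxmem
      have hxIoo : m ≤ w x ∧ w x ≤ M := ⟨csInf_le hbddB hwS, le_csSup hbddA hwS⟩
      have key := real_key (g x) (v x) (f x) m M hg.1 hg.2 hf.1 hf.2 hm0 hM1 hmM
        hxIoo.1 hxIoo.2
      calc ENNReal.ofReal (g x * (c - f x)^2 + h x)
          ≤ ENNReal.ofReal ((g x * (v x - f x)^2 + h x) + (M - m)) :=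
            ENNReal.ofReal_le_ofReal (by rw [hc]; linarith)
        _ ≤ _ := ENNReal.ofReal_add_le
    calc (∫⁻ x in Ioo (0:ℝ) 1, ENNReal.ofReal (g x * (c - f x)^2 + h x))
        ≤ ∫⁻ x in Ioo (0:ℝ) 1,
            (ENNReal.ofReal (g x * (v x - f x)^2 + h x) + ENNReal.ofReal (M - m)) :=
          lintegral_mono_ae hptwise
      _ = (∫⁻ x in Ioo (0:ℝ) 1, ENNReal.ofReal (g x * (v x - f x)^2 + h x))
            + ENNReal.ofReal (M - m) * 1 := by
          rw [lintegral_add_right _ measurable_const, lintegral_const, hμuniv]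
      _ = _ := by rw [mul_one]
  -- combine
  have hmain : ENNReal.ofReal (1/ε) * V ≤ ENNReal.ofReal lam * ENNReal.ofReal (M - m) := by
    have h1 := hineq c
    set I := ∫⁻ x in Ioo (0:ℝ) 1, ENNReal.ofReal (g x * (v x - f x)^2 + h x) with hI
    have h2 : ENNReal.ofReal (1/ε) * V + ENNReal.ofReal lam * I
        ≤ ENNReal.ofReal lam * I + ENNReal.ofReal lam * ENNReal.ofReal (M - m) := by
      calc ENNReal.ofReal (1/ε) * V + ENNReal.ofReal lam * I ≤ _ := h1
        _ ≤ ENNReal.ofReal lam * (I + ENNReal.ofReal (M - m)) :=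
            mul_le_mul_right hIc _
        _ = _ := by rw [mul_add]
    have hLI : ENNReal.ofReal lam * I ≠ ⊤ := ENNReal.mul_ne_top ENNReal.ofReal_ne_top hIfin
    rw [add_comm (ENNReal.ofReal (1/ε) * V) _] at h2
    exact (ENNReal.add_le_add_iff_left hLI).mp h2
  have hVzero : V = 0 := by
    by_contra hne
    have hlt : ENNReal.ofReal lam * V < ENNReal.ofReal (1/ε) * V := by
      apply ENNReal.mul_lt_mul_iff_left hne hVfin |>.mpr
      apply ENNReal.ofReal_lt_ofReal_iff_of_nonneg hlam.le |>.mpr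
      rw [lt_div_iff₀ hε]
      have := (lt_div_iff₀ (by positivity : (0:ℝ) < 4 * lam)).mp hεsmall
      nlinarith
    have hle : ENNReal.ofReal (1/ε) * V ≤ ENNReal.ofReal lam * V := by
      refine hmain.trans (mul_le_mul_right ?_ _)
      calc ENNReal.ofReal (M - m) ≤ ENNReal.ofReal t := ENNReal.ofReal_le_ofReal hosc
        _ = V := ENNReal.ofReal_toReal hVfin
    exact absurd hle (not_le.mpr hlt)
  refine ⟨v (1/2), fun x hx => ?_⟩
  have := eVariationOn.eq_zero_iff v (s := Ioo (0:ℝ) 1) |>.mp hVzero x hx (1/2) hhalf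
  exact edist_eq_zero.mp this

/-- Theorem 1: if `ε < 1/(4λ)` and `(u, v₁, v₂)` minimizes `F_ε` over
`(L²(0,1))³`, then `v₁` and `v₂` are constant functions. -/
theorem stmt6 (lam ε : ℝ) (hlam : 0 < lam) (hε : 0 < ε) (hεsmall : ε < 1 / (4 * lam))
    (f u v1 v2 : ℝ → ℝ)
    (hfBV : BoundedVariationOn f (Ioo 0 1))
    (hf01 : ∀ᵐ x ∂(volume.restrict (Ioo (0:ℝ) 1)), f x ∈ Icc (0:ℝ) 1)
    (hu : MemLp u 2 (volume.restrict (Ioo (0:ℝ) 1)))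
    (hv1 : MemLp v1 2 (volume.restrict (Ioo (0:ℝ) 1)))
    (hv2 : MemLp v2 2 (volume.restrict (Ioo (0:ℝ) 1)))
    (hmin : ∀ u' v1' v2' : ℝ → ℝ,
      MemLp u' 2 (volume.restrict (Ioo (0:ℝ) 1)) →
      MemLp v1' 2 (volume.restrict (Ioo (0:ℝ) 1)) →
      MemLp v2' 2 (volume.restrict (Ioo (0:ℝ) 1)) →
      Feps1 lam ε f u v1 v2 ≤ Feps1 lam ε f u' v1' v2') :
    (∃ c : ℝ, ∀ᵐ x ∂(volume.restrict (Ioo (0:ℝ) 1)), v1 x = c) ∧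
      (∃ c : ℝ, ∀ᵐ x ∂(volume.restrict (Ioo (0:ℝ) 1)), v2 x = c) := by
  haveI : IsFiniteMeasure (volume.restrict (Ioo (0:ℝ) 1)) :=
    ⟨by rw [Measure.restrict_apply_univ, Real.volume_Ioo]; norm_num⟩
  have hμuniv : (volume.restrict (Ioo (0:ℝ) 1)) univ = 1 := by
    rw [Measure.restrict_apply_univ, Real.volume_Ioo]; norm_num
  have hconstVar : ∀ c : ℝ, eVariationOn (fun _ : ℝ => c) (Ioo (0:ℝ) 1) = 0 := fun c =>
    eVariationOn.constant_on (by rintro a ⟨x, -, rfl⟩ b ⟨y, -, rfl⟩; rfl)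
  -- Feps1 expanded: the trailing indicator integral is part of the fidelity integrand
  have expand : ∀ U W1 W2 : ℝ → ℝ, Feps1 lam ε f U W1 W2 =
      eVariationOn U (Ioo (0:ℝ) 1)
        + ENNReal.ofReal (1/ε) * (eVariationOn W1 (Ioo (0:ℝ) 1) + eVariationOn W2 (Ioo (0:ℝ) 1))
        + ENNReal.ofReal lam *
            ((∫⁻ x in Ioo (0:ℝ) 1,
              ENNReal.ofReal (U x * (W1 x - f x)^2 + (1 - U x) * (W2 x - f x)^2))
             + ∫⁻ x in Ioo (0:ℝ) 1, (if U x ∈ Icc (0:ℝ) 1 then (0:ℝ≥0∞) else ⊤)) := by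
    intro U W1 W2
    unfold Feps1
    congr 1
    rw [lintegral_add_right _ measurable_const, lintegral_const, hμuniv, mul_one]
  -- finiteness of the minimum value
  have hint0 : (∫⁻ x in Ioo (0:ℝ) 1,
      ENNReal.ofReal ((0:ℝ) * ((0:ℝ) - f x) ^ 2
        + (1 - (0:ℝ)) * ((0:ℝ) - f x) ^ 2)) ≤ 1 := by
    calc _ ≤ ∫⁻ _x in Ioo (0:ℝ) 1, (1:ℝ≥0∞) := by
            refine lintegral_mono_ae ?_
            filter_upwards [hf01] with x hf
            have hb : (0:ℝ) * (0 - f x)^2 + (1 - 0) * (0 - f x)^2 ≤ 1 := by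
              nlinarith [hf.1, hf.2]
            calc ENNReal.ofReal ((0:ℝ) * ((0:ℝ) - f x) ^ 2 + (1 - (0:ℝ)) * ((0:ℝ) - f x) ^ 2)
                ≤ ENNReal.ofReal 1 := ENNReal.ofReal_le_ofReal hb
              _ = 1 := ENNReal.ofReal_one
      _ = 1 := by rw [lintegral_const, hμuniv, one_mul]
  have hF000 : Feps1 lam ε f (fun _ => 0) (fun _ => 0) (fun _ => 0) ≠ ⊤ := by
    rw [expand]
    have hind : (∫⁻ _x in Ioo (0:ℝ) 1,
        (if (0:ℝ) ∈ Icc (0:ℝ) 1 then (0:ℝ≥0∞) else ⊤)) = 0 := by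
      simp
    rw [hconstVar, hind, add_zero]
    simp only [zero_add, add_zero, mul_zero]
    exact ENNReal.mul_ne_top ENNReal.ofReal_ne_top (ne_top_of_le_ne_top ENNReal.one_ne_top hint0)
  have hFfin : Feps1 lam ε f u v1 v2 ≠ ⊤ :=
    ne_top_of_le_ne_top hF000
      (hmin _ _ _ (memLp_const 0) (memLp_const 0) (memLp_const 0))
  rw [expand] at hFfin
  set r : ℝ≥0∞ := ENNReal.ofReal (1/ε) with hr
  set L : ℝ≥0∞ := ENNReal.ofReal lam with hL
  have hrne : r ≠ 0 := by
    rw [hr]; exact (ENNReal.ofReal_pos.mpr (by positivity)).ne'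
  have hLne : L ≠ 0 := by
    rw [hL]; exact (ENNReal.ofReal_pos.mpr hlam).ne'
  set A := eVariationOn u (Ioo (0:ℝ) 1) with hA
  set V1 := eVariationOn v1 (Ioo (0:ℝ) 1) with hV1d
  set V2 := eVariationOn v2 (Ioo (0:ℝ) 1) with hV2d
  set I : ℝ≥0∞ := ∫⁻ x in Ioo (0:ℝ) 1,
      ENNReal.ofReal (u x * (v1 x - f x) ^ 2 + (1 - u x) * (v2 x - f x) ^ 2) with hI
  set J : ℝ≥0∞ := ∫⁻ x in Ioo (0:ℝ) 1,
      (if u x ∈ Icc (0:ℝ) 1 then (0:ℝ≥0∞) else ⊤) with hJ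
  -- extract finiteness of the pieces
  have h1 := ENNReal.add_ne_top.mp hFfin
  have h2 := ENNReal.add_ne_top.mp h1.1
  have hAne : A ≠ ⊤ := h2.1
  have hIJ : I + J ≠ ⊤ := by
    intro htop
    rw [htop, ENNReal.mul_top hLne] at h1
    exact h1.2 rfl
  have hIne : I ≠ ⊤ := fun h => hIJ (by rw [h, top_add])
  have hJne : J ≠ ⊤ := fun h => hIJ (by rw [h, add_top])
  have hV12 : V1 + V2 ≠ ⊤ := by
    intro htop
    rw [htop, ENNReal.mul_top hrne] at h2
    exact h2.2 rfl
  have hV1ne : V1 ≠ ⊤ := fun h => hV12 (by rw [h, top_add])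
  have hV2ne : V2 ≠ ⊤ := fun h => hV12 (by rw [h, add_top])
  -- a.e. 0 ≤ u ≤ 1
  have hu01 : ∀ᵐ x ∂(volume.restrict (Ioo (0:ℝ) 1)), u x ∈ Icc (0:ℝ) 1 := by
    obtain ⟨u', hu'm, hu'e⟩ := hu.aestronglyMeasurable.aemeasurable
    have hgm : Measurable fun x => (if u' x ∈ Icc (0:ℝ) 1 then (0:ℝ≥0∞) else ⊤) :=
      Measurable.ite (hu'm measurableSet_Icc) measurable_const measurable_const
    have hae : (fun x => (if u x ∈ Icc (0:ℝ) 1 then (0:ℝ≥0∞) else ⊤))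
        =ᵐ[volume.restrict (Ioo (0:ℝ) 1)]
        fun x => (if u' x ∈ Icc (0:ℝ) 1 then (0:ℝ≥0∞) else ⊤) :=
      hu'e.mono fun x hx => by simp only [hx]
    have hlt := ae_lt_top' (hgm.aemeasurable.congr hae.symm) hJne
    filter_upwards [hlt] with x hx
    by_contra h'
    rw [if_neg h'] at hx
    exact absurd hx (lt_irrefl _)
  -- slot 1 : competitor (u, const c, v2)
  have hineq1 : ∀ c : ℝ,
      r * V1 + L * I ≤ L * ∫⁻ x in Ioo (0:ℝ) 1,
        ENNReal.ofReal (u x * (c - f x)^2 + (1 - u x) * (v2 x - f x)^2) := by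
    intro c
    have h := hmin u (fun _ => c) v2 hu (memLp_const c) hv2
    rw [expand, expand] at h
    rw [hconstVar] at h
    set Ic : ℝ≥0∞ := ∫⁻ x in Ioo (0:ℝ) 1,
        ENNReal.ofReal (u x * (c - f x)^2 + (1 - u x) * (v2 x - f x)^2) with hIc
    set X : ℝ≥0∞ := A + r * V2 + L * J with hX
    have hXne : X ≠ ⊤ := by
      rw [hX]
      exact ENNReal.add_ne_top.mpr
        ⟨ENNReal.add_ne_top.mpr ⟨hAne, ENNReal.mul_ne_top ENNReal.ofReal_ne_top hV2ne⟩,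
          ENNReal.mul_ne_top ENNReal.ofReal_ne_top hJne⟩
    have h2' : X + (r * V1 + L * I) ≤ X + L * Ic := by
      calc X + (r * V1 + L * I)
          = A + r * (V1 + V2) + L * (I + J) := by rw [hX]; ring
        _ ≤ A + r * (0 + V2) + L * (Ic + J) := h
        _ = X + L * Ic := by rw [hX]; ring
    exact (ENNReal.add_le_add_iff_left hXne).mp h2'
  -- slot 2 : competitor (u, v1, const c)
  have hswap : ∀ W : ℝ → ℝ,
      (∫⁻ x in Ioo (0:ℝ) 1,
        ENNReal.ofReal (u x * (v1 x - f x)^2 + (1 - u x) * (W x - f x)^2))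
      = ∫⁻ x in Ioo (0:ℝ) 1,
        ENNReal.ofReal ((1 - u x) * (W x - f x)^2 + u x * (v1 x - f x)^2) :=
    fun W => lintegral_congr fun x => by rw [add_comm]
  have hineq2 : ∀ c : ℝ,
      r * V2 + L * (∫⁻ x in Ioo (0:ℝ) 1,
          ENNReal.ofReal ((1 - u x) * (v2 x - f x)^2 + u x * (v1 x - f x)^2))
        ≤ L * ∫⁻ x in Ioo (0:ℝ) 1,
            ENNReal.ofReal ((1 - u x) * (c - f x)^2 + u x * (v1 x - f x)^2) := by
    intro c
    have h := hmin u v1 (fun _ => c) hu hv1 (memLp_const c)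
    rw [expand, expand] at h
    rw [hconstVar] at h
    set Ic : ℝ≥0∞ := ∫⁻ x in Ioo (0:ℝ) 1,
        ENNReal.ofReal (u x * (v1 x - f x)^2 + (1 - u x) * (c - f x)^2) with hIc
    set X : ℝ≥0∞ := A + r * V1 + L * J with hX
    have hXne : X ≠ ⊤ := by
      rw [hX]
      exact ENNReal.add_ne_top.mpr
        ⟨ENNReal.add_ne_top.mpr ⟨hAne, ENNReal.mul_ne_top ENNReal.ofReal_ne_top hV1ne⟩,
          ENNReal.mul_ne_top ENNReal.ofReal_ne_top hJne⟩
    have h2' : X + (r * V2 + L * I) ≤ X + L * Ic := by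
      calc X + (r * V2 + L * I)
          = A + r * (V1 + V2) + L * (I + J) := by rw [hX]; ring
        _ ≤ A + r * (V1 + 0) + L * (Ic + J) := h
        _ = X + L * Ic := by rw [hX]; ring
    have h3' := (ENNReal.add_le_add_iff_left hXne).mp h2'
    rw [hI, hswap] at h3'
    rw [hIc, hswap] at h3'
    exact h3'
  -- apply the key lemma
  have hu01' : ∀ᵐ x ∂(volume.restrict (Ioo (0:ℝ) 1)), (1 - u x) ∈ Icc (0:ℝ) 1 :=
    hu01.mono fun x hx => ⟨by linarith [hx.2], by linarith [hx.1]⟩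
  have hIfin1 : (∫⁻ x in Ioo (0:ℝ) 1,
      ENNReal.ofReal (u x * (v1 x - f x)^2 + (1 - u x) * (v2 x - f x)^2)) ≠ ⊤ := hIne
  have hIfin2 : (∫⁻ x in Ioo (0:ℝ) 1,
      ENNReal.ofReal ((1 - u x) * (v2 x - f x)^2 + u x * (v1 x - f x)^2)) ≠ ⊤ := by
    rw [← hswap]; exact hIne
  obtain ⟨c1, hc1⟩ := slot_aux lam ε hlam hε hεsmall f u
    (fun x => (1 - u x) * (v2 x - f x)^2) v1 hf01 hu01 hV1ne hIfin1 hineq1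
  obtain ⟨c2, hc2⟩ := slot_aux lam ε hlam hε hεsmall f (fun x => 1 - u x)
    (fun x => u x * (v1 x - f x)^2) v2 hf01 hu01' hV2ne hIfin2 hineq2
  refine ⟨⟨c1, ?_⟩, ⟨c2, ?_⟩⟩
  · filter_upwards [self_mem_ae_restrict measurableSet_Ioo] with x hx
    exact hc1 x hx
  · filter_upwards [self_mem_ae_restrict measurableSet_Ioo] with x hx
    exact hc2 x hx
end

section
/- Let h : ℝ → ℝ be a C¹ nondecreasing Lipschitz function and u ∈ BV(0,1) ∩ L²(0,1). Suppose v ∈ L²(0,1) belongs to the subdifferential at u of the total variation functional Φ (so that v = -z' for some z ∈ H¹₀(0,1) with |z| ≤ 1 a.e. and |Du| = z·Du). Then ⟨v, h(u)⟩_{L²} = |D(h(u))|((0,1)). -/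
open scoped ENNReal NNReal
open MeasureTheory Set

private lemma stmt17_chain {E : Type*} [PseudoEMetricSpace E] (F : ℕ → E) {σ : ℕ → ℕ}
    (hσ : Monotone σ) (n : ℕ) :
    ∑ i ∈ Finset.range n, edist (F (σ (i + 1))) (F (σ i))
      ≤ ∑ j ∈ Finset.range (σ n), edist (F (j + 1)) (F j) := by
  induction n with
  | zero => simp
  | succ n ih =>
      rw [Finset.sum_range_succ]
      have h1 : edist (F (σ (n + 1))) (F (σ n))
          ≤ ∑ j ∈ Finset.Ico (σ n) (σ (n + 1)), edist (F (j + 1)) (F j) := by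
        rw [edist_comm]
        simpa [edist_comm] using edist_le_Ico_sum_edist F (hσ (Nat.le_succ n))
      calc (∑ i ∈ Finset.range n, edist (F (σ (i + 1))) (F (σ i))) + edist (F (σ (n + 1))) (F (σ n))
          ≤ (∑ j ∈ Finset.range (σ n), edist (F (j + 1)) (F j))
            + ∑ j ∈ Finset.Ico (σ n) (σ (n + 1)), edist (F (j + 1)) (F j) :=
            add_le_add ih h1
        _ = ∑ j ∈ Finset.range (σ (n + 1)), edist (F (j + 1)) (F j) := by
            rw [Finset.range_eq_Ico, Finset.range_eq_Ico]
            exact Finset.sum_Ico_consecutive (fun j => edist (F (j + 1)) (F j)) (Nat.zero_le _) (hσ (Nat.le_succ n))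

private lemma stmt17_merge {s : Set ℝ} {p q : ℕ → ℝ}
    (hp : Monotone p) (hps : ∀ i, p i ∈ s) (hq : Monotone q) (hqs : ∀ i, q i ∈ s) (n m : ℕ) :
    ∃ (N : ℕ) (r : ℕ → ℝ), Monotone r ∧ (∀ i, r i ∈ s) ∧
      ∃ σ τ : ℕ → ℕ, Monotone σ ∧ Monotone τ ∧ σ n ≤ N ∧ τ m ≤ N ∧
        (∀ i, r (σ i) = p (min i n)) ∧ (∀ i, r (τ i) = q (min i m)) := by
  classical
  set T : Finset ℝ := ((Finset.range (n + 1)).image p) ∪ ((Finset.range (m + 1)).image q) with hT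
  have hpT : ∀ i, p (min i n) ∈ T := fun i => by
    apply Finset.mem_union_left
    exact Finset.mem_image_of_mem p (Finset.mem_range.2 (Nat.lt_succ_of_le (min_le_right i n)))
  have hqT : ∀ i, q (min i m) ∈ T := fun i => by
    apply Finset.mem_union_right
    exact Finset.mem_image_of_mem q (Finset.mem_range.2 (Nat.lt_succ_of_le (min_le_right i m)))
  have hTs : ∀ x ∈ T, x ∈ s := by
    intro x hx
    rcases Finset.mem_union.1 hx with hx | hx <;>
      · obtain ⟨i, -, rfl⟩ := Finset.mem_image.1 hx
        first | exact hps i | exact hqs i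
  have hc : 0 < T.card := Finset.card_pos.2 ⟨_, hpT 0⟩
  set e := T.orderIsoOfFin rfl with he
  refine ⟨T.card - 1, fun i => (e ⟨min i (T.card - 1), by omega⟩ : ℝ), ?_, ?_, ?_⟩
  · intro i j hij
    have : (⟨min i (T.card - 1), by omega⟩ : Fin T.card) ≤ ⟨min j (T.card - 1), by omega⟩ := by
      simp only [Fin.mk_le_mk]
      exact min_le_min hij le_rfl
    exact e.monotone this
  · intro i
    exact hTs _ (e ⟨min i (T.card - 1), by omega⟩).2
  · refine ⟨fun i => (e.symm ⟨p (min i n), hpT i⟩ : Fin T.card),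
      fun i => (e.symm ⟨q (min i m), hqT i⟩ : Fin T.card), ?_, ?_, ?_, ?_, ?_, ?_⟩
    · intro i j hij
      exact_mod_cast e.symm.monotone (Subtype.mk_le_mk.2 (hp (min_le_min hij le_rfl)))
    · intro i j hij
      exact_mod_cast e.symm.monotone (Subtype.mk_le_mk.2 (hq (min_le_min hij le_rfl)))
    · exact Nat.le_sub_one_of_lt (e.symm ⟨p (min n n), hpT n⟩).2
    · exact Nat.le_sub_one_of_lt (e.symm ⟨q (min m m), hqT m⟩).2
    · intro i
      have hlt : ((e.symm ⟨p (min i n), hpT i⟩ : Fin T.card) : ℕ) < T.card :=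
        (e.symm ⟨p (min i n), hpT i⟩).2
      have : (⟨min ((e.symm ⟨p (min i n), hpT i⟩ : Fin T.card) : ℕ) (T.card - 1), by omega⟩ :
          Fin T.card) = e.symm ⟨p (min i n), hpT i⟩ := by
        apply Fin.ext
        simp only []
        omega
      simp only [this, OrderIso.apply_symm_apply]
    · intro i
      have hlt : ((e.symm ⟨q (min i m), hqT i⟩ : Fin T.card) : ℕ) < T.card :=
        (e.symm ⟨q (min i m), hqT i⟩).2
      have : (⟨min ((e.symm ⟨q (min i m), hqT i⟩ : Fin T.card) : ℕ) (T.card - 1), by omega⟩ :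
          Fin T.card) = e.symm ⟨q (min i m), hqT i⟩ := by
        apply Fin.ext
        simp only []
        omega
      simp only [this, OrderIso.apply_symm_apply]

private lemma stmt17_superadd {f g : ℝ → ℝ} {s : Set ℝ}
    (H : ∀ x ∈ s, ∀ y ∈ s,
      edist (f x) (f y) + edist (g x) (g y) = edist (f x + g x) (f y + g y)) :
    eVariationOn f s + eVariationOn g s ≤ eVariationOn (fun x => f x + g x) s := by
  rcases s.eq_empty_or_nonempty with rfl | hs
  · simp [eVariationOn.subsingleton _ subsingleton_empty]
  haveI := eVariationOn.nonempty_monotone_mem hs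
  rw [eVariationOn, eVariationOn]
  rw [ENNReal.iSup_add_iSup ?_]
  · apply iSup_le
    rintro ⟨n, ⟨r, hr, hrs⟩⟩
    have : (∑ i ∈ Finset.range n, edist (f (r (i + 1))) (f (r i)))
        + ∑ i ∈ Finset.range n, edist (g (r (i + 1))) (g (r i))
        = ∑ i ∈ Finset.range n,
            edist (f (r (i + 1)) + g (r (i + 1))) (f (r i) + g (r i)) := by
      rw [← Finset.sum_add_distrib]
      exact Finset.sum_congr rfl fun i _ => H _ (hrs _) _ (hrs _)
    rw [this]
    exact eVariationOn.sum_le (n := n) hr hrs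
  · rintro ⟨n, ⟨p, hp, hps⟩⟩ ⟨m, ⟨q, hq, hqs⟩⟩
    obtain ⟨N, r, hr, hrs, σ, τ, hσ, hτ, hσN, hτN, hrσ, hrτ⟩ :=
      stmt17_merge hp hps hq hqs n m
    refine ⟨⟨N, ⟨r, hr, hrs⟩⟩, add_le_add ?_ ?_⟩
    · have hrw : ∑ i ∈ Finset.range n, edist (f (p (i + 1))) (f (p i))
          = ∑ i ∈ Finset.range n, edist ((f ∘ r) (σ (i + 1))) ((f ∘ r) (σ i)) := by
        refine Finset.sum_congr rfl fun i hi => ?_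
        have hi' := Finset.mem_range.1 hi
        rw [Function.comp_apply, Function.comp_apply, hrσ, hrσ,
          min_eq_left (by omega), min_eq_left (by omega)]
      rw [hrw]
      exact (stmt17_chain (f ∘ r) hσ n).trans
        (Finset.sum_le_sum_of_subset (Finset.range_subset_range.2 hσN))
    · have hrw : ∑ i ∈ Finset.range m, edist (g (q (i + 1))) (g (q i))
          = ∑ i ∈ Finset.range m, edist ((g ∘ r) (τ (i + 1))) ((g ∘ r) (τ i)) := by
        refine Finset.sum_congr rfl fun i hi => ?_
        have hi' := Finset.mem_range.1 hi
        rw [Function.comp_apply, Function.comp_apply, hrτ, hrτ,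
          min_eq_left (by omega), min_eq_left (by omega)]
      rw [hrw]
      exact (stmt17_chain (g ∘ r) hτ m).trans
        (Finset.sum_le_sum_of_subset (Finset.range_subset_range.2 hτN))

private lemma stmt17_subadd (f g : ℝ → ℝ) (s : Set ℝ) :
    eVariationOn (fun x => f x + g x) s ≤ eVariationOn f s + eVariationOn g s := by
  apply iSup_le
  rintro ⟨n, ⟨r, hr, hrs⟩⟩
  calc ∑ i ∈ Finset.range n, edist (f (r (i + 1)) + g (r (i + 1))) (f (r i) + g (r i))
      ≤ ∑ i ∈ Finset.range n,
          (edist (f (r (i + 1))) (f (r i)) + edist (g (r (i + 1))) (g (r i))) :=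
        Finset.sum_le_sum fun i _ => edist_add_add_le _ _ _ _
    _ = (∑ i ∈ Finset.range n, edist (f (r (i + 1))) (f (r i)))
        + ∑ i ∈ Finset.range n, edist (g (r (i + 1))) (g (r i)) := Finset.sum_add_distrib
    _ ≤ eVariationOn f s + eVariationOn g s :=
        add_le_add (eVariationOn.sum_le (n := n) hr hrs) (eVariationOn.sum_le (n := n) hr hrs)

private lemma stmt17_scale {c : ℝ} (hc : 0 ≤ c) (f : ℝ → ℝ) (s : Set ℝ) :
    eVariationOn (fun x => c * f x) s = ENNReal.ofReal c * eVariationOn f s := by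
  rw [eVariationOn, eVariationOn, ENNReal.mul_iSup]
  congr 1
  funext p
  rw [Finset.mul_sum]
  refine Finset.sum_congr rfl fun i _ => ?_
  rw [edist_dist, edist_dist, Real.dist_eq, Real.dist_eq, ← mul_sub, abs_mul,
    abs_of_nonneg hc, ENNReal.ofReal_mul hc]

private lemma stmt17_abs_le {K ε : ℝ} (hε : 0 ≤ ε) (hεK : ε * K ≤ 1) {h : ℝ → ℝ}
    (hm : Monotone h) (hL : ∀ a b : ℝ, |h a - h b| ≤ K * |a - b|) {a b : ℝ} (hab : b ≤ a) :
    |(a - ε * h a) - (b - ε * h b)| + |ε * h a - ε * h b| = |a - b| := by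
  have h1 : h b ≤ h a := hm hab
  have h2 : h a - h b ≤ K * (a - b) := by
    have := hL a b
    rwa [abs_of_nonneg (sub_nonneg.2 h1), abs_of_nonneg (sub_nonneg.2 hab)] at this
  have h3 : ε * (h a - h b) ≤ a - b := by
    nlinarith [mul_le_mul_of_nonneg_left h2 hε,
      mul_le_mul_of_nonneg_right hεK (sub_nonneg.2 hab)]
  rw [abs_of_nonneg (sub_nonneg.2 hab),
    abs_of_nonneg (by nlinarith : (0:ℝ) ≤ ε * h a - ε * h b),
    abs_of_nonneg (by nlinarith : (0:ℝ) ≤ (a - ε * h a) - (b - ε * h b))]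
  ring

private lemma stmt17_abs {K ε : ℝ} (hε : 0 ≤ ε) (hεK : ε * K ≤ 1) {h : ℝ → ℝ}
    (hm : Monotone h) (hL : ∀ a b : ℝ, |h a - h b| ≤ K * |a - b|) (a b : ℝ) :
    |(a - ε * h a) - (b - ε * h b)| + |ε * h a - ε * h b| = |a - b| := by
  rcases le_total b a with hab | hab
  · exact stmt17_abs_le hε hεK hm hL hab
  · rw [abs_sub_comm, abs_sub_comm (ε * h a), abs_sub_comm a]
    exact stmt17_abs_le hε hεK hm hL hab

/-- let `h` be a `C¹` nondecreasing Lipschitz function, `u ∈ BV(0,1) ∩ L²(0,1)`,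
and let `v ∈ L²(0,1)` belong to the `L²` subdifferential at `u` of the total variation
functional `Φ`. Then `⟨v, h(u)⟩_{L²} = |D(h(u))|((0,1))`. -/
theorem stmt17 (h : ℝ → ℝ) (hC1 : ContDiff ℝ 1 h) (hmono : Monotone h)
    (K : ℝ≥0) (hLip : LipschitzWith K h)
    (u v : ℝ → ℝ)
    (hu2 : MemLp u 2 (volume.restrict (Ioo (0:ℝ) 1)))
    (huBV : BoundedVariationOn u (Ioo 0 1))
    (hv2 : MemLp v 2 (volume.restrict (Ioo (0:ℝ) 1)))
    (hsub : ∀ w : ℝ → ℝ, MemLp w 2 (volume.restrict (Ioo (0:ℝ) 1)) →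
      BoundedVariationOn w (Ioo 0 1) →
      (eVariationOn u (Ioo 0 1)).toReal + ∫ x in Ioo (0:ℝ) 1, v x * (w x - u x)
        ≤ (eVariationOn w (Ioo 0 1)).toReal) :
    ∫ x in Ioo (0:ℝ) 1, v x * h (u x) = (eVariationOn (fun x => h (u x)) (Ioo 0 1)).toReal := by
  set μ := volume.restrict (Ioo (0:ℝ) 1) with hμ
  haveI : IsFiniteMeasure μ := by
    constructor
    rw [hμ, Measure.restrict_apply_univ, Real.volume_Ioo]
    exact ENNReal.ofReal_lt_top
  set ε : ℝ := (1 + (K:ℝ))⁻¹ with hεdef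
  have hε : 0 < ε := inv_pos.2 (by positivity)
  have hεK : ε * (K:ℝ) ≤ 1 := by
    rw [hεdef, inv_mul_le_iff₀ (by positivity : (0:ℝ) < 1 + (K:ℝ))]
    linarith [K.2]
  have hL : ∀ a b : ℝ, |h a - h b| ≤ (K:ℝ) * |a - b| := fun a b => by
    have := hLip.dist_le_mul a b
    rwa [Real.dist_eq, Real.dist_eq] at this
  -- Memℒp of h ∘ u
  have hhu2 : MemLp (fun x => h (u x)) 2 μ := by
    have l1 : LipschitzWith K (fun t => h t - h 0) := LipschitzWith.of_dist_le_mul fun a b => by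
      simpa [Real.dist_eq, sub_sub_sub_cancel_right] using hLip.dist_le_mul a b
    have l2 : MemLp ((fun t => h t - h 0) ∘ u) 2 μ := l1.comp_memLp (by simp) hu2
    have l3 : MemLp (fun _ : ℝ => h 0) 2 μ := memLp_const _
    have l4 : (fun x : ℝ => h (u x)) = fun x => ((fun t => h t - h 0) ∘ u) x + h 0 := by
      funext x; simp
    rw [l4]
    exact l2.add l3
  -- BV facts
  have hBVh : BoundedVariationOn (fun x => h (u x)) (Ioo 0 1) :=
    hLip.comp_boundedVariationOn huBV
  have hscale : eVariationOn (fun x => ε * h (u x)) (Ioo 0 1)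
      = ENNReal.ofReal ε * eVariationOn (fun x => h (u x)) (Ioo 0 1) :=
    stmt17_scale hε.le _ _
  have hBVg : BoundedVariationOn (fun x => ε * h (u x)) (Ioo 0 1) := by
    rw [BoundedVariationOn, hscale]
    exact ENNReal.mul_ne_top ENNReal.ofReal_ne_top hBVh
  -- key superadditivity
  have Hkey : ∀ x ∈ Ioo (0:ℝ) 1, ∀ y ∈ Ioo (0:ℝ) 1,
      edist ((fun x => u x - ε * h (u x)) x) ((fun x => u x - ε * h (u x)) y)
        + edist ((fun x => ε * h (u x)) x) ((fun x => ε * h (u x)) y)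
      = edist ((fun x => u x - ε * h (u x)) x + (fun x => ε * h (u x)) x)
          ((fun x => u x - ε * h (u x)) y + (fun x => ε * h (u x)) y) := by
    intro x _ y _
    simp only []
    rw [edist_dist, edist_dist, edist_dist, Real.dist_eq, Real.dist_eq, Real.dist_eq,
      ← ENNReal.ofReal_add (abs_nonneg _) (abs_nonneg _)]
    congr 1
    rw [show u x - ε * h (u x) + ε * h (u x) = u x from by ring,
      show u y - ε * h (u y) + ε * h (u y) = u y from by ring]
    exact stmt17_abs hε.le hεK hmono hL (u x) (u y)
  have S : eVariationOn (fun x => u x - ε * h (u x)) (Ioo 0 1)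
        + eVariationOn (fun x => ε * h (u x)) (Ioo 0 1) ≤ eVariationOn u (Ioo 0 1) := by
    have := stmt17_superadd Hkey
    rwa [show (fun x => (fun x => u x - ε * h (u x)) x + (fun x => ε * h (u x)) x) = u from
      funext fun x => by simp] at this
  have hBVm : BoundedVariationOn (fun x => u x - ε * h (u x)) (Ioo 0 1) := by
    intro htop
    apply huBV
    have : (⊤ : ℝ≥0∞) ≤ eVariationOn u (Ioo 0 1) := by
      calc (⊤ : ℝ≥0∞) = eVariationOn (fun x => u x - ε * h (u x)) (Ioo 0 1) := htop.symm
        _ ≤ _ := le_self_add.trans S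
    exact top_le_iff.1 this
  have hBVp : BoundedVariationOn (fun x => u x + ε * h (u x)) (Ioo 0 1) := by
    intro htop
    have := (stmt17_subadd u (fun x => ε * h (u x)) (Ioo 0 1)).trans_lt
      (ENNReal.add_lt_top.2 ⟨lt_top_iff_ne_top.2 huBV, lt_top_iff_ne_top.2 hBVg⟩)
    rw [htop] at this
    exact (lt_irrefl _ this).elim
  -- apply hsub with the two perturbations
  set I : ℝ := ∫ x in Ioo (0:ℝ) 1, v x * h (u x) with hI
  have A := hsub (fun x => u x + ε * h (u x)) (hu2.add (hhu2.const_mul ε)) hBVp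
  have eA : (∫ x in Ioo (0:ℝ) 1, v x * ((fun x => u x + ε * h (u x)) x - u x)) = ε * I := by
    rw [show (fun x => v x * ((fun x => u x + ε * h (u x)) x - u x))
        = fun x => ε * (v x * h (u x)) from funext fun x => by simp; ring]
    rw [hI]
    exact integral_const_mul ε _
  rw [eA] at A
  have B := hsub (fun x => u x - ε * h (u x)) (hu2.sub (hhu2.const_mul ε)) hBVm
  have eB : (∫ x in Ioo (0:ℝ) 1, v x * ((fun x => u x - ε * h (u x)) x - u x)) = -(ε * I) := by
    rw [show (fun x => v x * ((fun x => u x - ε * h (u x)) x - u x))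
        = fun x => -(ε * (v x * h (u x))) from funext fun x => by simp; ring]
    rw [integral_neg, hI]
    rw [integral_const_mul ε _]
  rw [eB] at B
  -- translate everything to real numbers
  set Vu : ℝ := (eVariationOn u (Ioo 0 1)).toReal
  set Vh : ℝ := (eVariationOn (fun x => h (u x)) (Ioo 0 1)).toReal with hVh
  have hup : (eVariationOn (fun x => u x + ε * h (u x)) (Ioo 0 1)).toReal ≤ Vu + ε * Vh := by
    have le1 : eVariationOn (fun x => u x + ε * h (u x)) (Ioo 0 1)
        ≤ eVariationOn u (Ioo 0 1) + ENNReal.ofReal ε * eVariationOn (fun x => h (u x)) (Ioo 0 1) := by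
      rw [← hscale]
      exact stmt17_subadd u (fun x => ε * h (u x)) (Ioo 0 1)
    have hne : eVariationOn u (Ioo 0 1)
        + ENNReal.ofReal ε * eVariationOn (fun x => h (u x)) (Ioo 0 1) ≠ ⊤ :=
      ENNReal.add_ne_top.2 ⟨huBV, ENNReal.mul_ne_top ENNReal.ofReal_ne_top hBVh⟩
    calc (eVariationOn (fun x => u x + ε * h (u x)) (Ioo 0 1)).toReal
        ≤ (eVariationOn u (Ioo 0 1)
            + ENNReal.ofReal ε * eVariationOn (fun x => h (u x)) (Ioo 0 1)).toReal :=
          ENNReal.toReal_mono hne le1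
      _ = Vu + ε * Vh := by
          rw [ENNReal.toReal_add huBV (ENNReal.mul_ne_top ENNReal.ofReal_ne_top hBVh),
            ENNReal.toReal_mul, ENNReal.toReal_ofReal hε.le]
  have hdown : (eVariationOn (fun x => u x - ε * h (u x)) (Ioo 0 1)).toReal + ε * Vh ≤ Vu := by
    have := ENNReal.toReal_mono huBV S
    rwa [ENNReal.toReal_add hBVm hBVg, hscale, ENNReal.toReal_mul,
      ENNReal.toReal_ofReal hε.le] at this
  have hIVh : I ≤ Vh := le_of_mul_le_mul_left (by linarith) hε
  have hVhI : Vh ≤ I := le_of_mul_le_mul_left (by linarith) hε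
  rw [hI, hVh] at *
  linarith
end

section
/- Let f ∈ BV(0,1) with 0 ≤ f ≤ 1, satisfying that for every c ∈ (0,1) the topological boundary of the level set {x ∈ (0,1)∖J_f : f(x) = c} has zero Lebesgue measure. Let λ > 0 and let (u, c₁, c₂) be a minimizer of F(u,c₁,c₂) = |Du|((0,1)) + ∫₀¹𝕀_{[0,1]}(u) dx + λ∫₀¹[u(c₁-f)² + (1-u)(c₂-f)²] dx. Then either u is constant or u takes only the values 0 and 1 a.e. (u is a binary BV function). -/
open scoped ENNReal NNReal
open MeasureTheory Set

/-- The one-dimensional Chan--Vese type functional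
`F(u,c₁,c₂) = |Du|((0,1)) + ∫ 𝕀_{[0,1]}(u) + λ∫ u(c₁-f)² + (1-u)(c₂-f)²`. -/
noncomputable def Fcv (lam : ℝ) (f : ℝ → ℝ) (u : ℝ → ℝ) (c₁ c₂ : ℝ) : ℝ≥0∞ :=
  eVariationOn u (Ioo 0 1)
    + (∫⁻ x in Ioo (0:ℝ) 1, (if u x ∈ Icc (0:ℝ) 1 then 0 else ⊤))
    + ENNReal.ofReal lam * ∫⁻ x in Ioo (0:ℝ) 1,
        ENNReal.ofReal (u x * (c₁ - f x) ^ 2 + (1 - u x) * (c₂ - f x) ^ 2)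

set_option maxHeartbeats 1000000

namespace Stmt18


/-- chaining triangle inequality along a sequence -/
lemma edist_chain (v : ℝ → ℝ) (r : ℕ → ℝ) (a b : ℕ) (hab : a ≤ b) :
    edist (v (r b)) (v (r a)) ≤ ∑ k ∈ Finset.Ico a b, edist (v (r (k + 1))) (v (r k)) := by
  induction b, hab using Nat.le_induction with
  | base => simp
  | succ b hab ih =>
    rw [Finset.sum_Ico_succ_top (by omega : a ≤ b)]
    calc edist (v (r (b + 1))) (v (r a))
        ≤ edist (v (r (b + 1))) (v (r b)) + edist (v (r b)) (v (r a)) := edist_triangle _ _ _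
      _ ≤ edist (v (r (b + 1))) (v (r b)) + ∑ k ∈ Finset.Ico a b, edist (v (r (k + 1))) (v (r k)) := by
          exact add_le_add le_rfl ih
      _ = _ := by ring

lemma sum_le_sum_of_subindex (v : ℝ → ℝ) (r : ℕ → ℝ) (J : ℕ → ℕ) (hJ : Monotone J) (n : ℕ) :
    ∑ i ∈ Finset.range n, edist (v (r (J (i + 1)))) (v (r (J i))) ≤
      ∑ k ∈ Finset.Ico (J 0) (J n), edist (v (r (k + 1))) (v (r k)) := by
  induction n with
  | zero => simp
  | succ n ih =>
    rw [Finset.sum_range_succ,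
      ← Finset.sum_Ico_consecutive _ (hJ (Nat.zero_le n)) (hJ (Nat.le_succ n))]
    exact add_le_add ih (edist_chain v r (J n) (J (n + 1)) (hJ (Nat.le_succ n)))

/-- partition-sum refinement: if every point of `p` (a monotone partition) appears in the
monotone sequence `r` with index `≤ M`, then the sum along `p` is at most the sum along `r`. -/
lemma sum_le_refine (v : ℝ → ℝ) {p r : ℕ → ℝ} (hp : Monotone p) (hr : Monotone r) (n M : ℕ)
    (cover : ∀ i, ∃ j, j ≤ M ∧ r j = p i) :
    ∑ i ∈ Finset.range n, edist (v (p (i + 1))) (v (p i)) ≤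
      ∑ k ∈ Finset.range M, edist (v (r (k + 1))) (v (r k)) := by
  have ex : ∀ i, ∃ j, r j = p i := fun i => ⟨(cover i).choose, (cover i).choose_spec.2⟩
  set J : ℕ → ℕ := fun i => Nat.find (ex i) with hJdef
  have hJr : ∀ i, r (J i) = p i := fun i => Nat.find_spec (ex i)
  have hJM : ∀ i, J i ≤ M := fun i =>
    le_trans (Nat.find_min' (ex i) (cover i).choose_spec.2) (cover i).choose_spec.1
  have hJmono : Monotone J := by
    intro i i' hii'
    rcases eq_or_lt_of_le (hp hii') with he | hlt
    · exact Nat.find_min' (ex i) (by rw [hJr i', ← he])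
    · by_contra hcon
      push_neg at hcon
      have h2 := hr hcon.le
      rw [hJr i, hJr i'] at h2
      exact absurd h2 (not_le.2 hlt)
  calc ∑ i ∈ Finset.range n, edist (v (p (i + 1))) (v (p i))
      = ∑ i ∈ Finset.range n, edist (v (r (J (i + 1)))) (v (r (J i))) := by
        refine Finset.sum_congr rfl fun i _ => by rw [hJr, hJr]
    _ ≤ ∑ k ∈ Finset.Ico (J 0) (J n), edist (v (r (k + 1))) (v (r k)) :=
        sum_le_sum_of_subindex v r J hJmono n
    _ ≤ ∑ k ∈ Finset.range M, edist (v (r (k + 1))) (v (r k)) := by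
        apply Finset.sum_le_sum_of_subset
        intro k hk
        simp only [Finset.mem_Ico] at hk
        simp only [Finset.mem_range]
        exact lt_of_lt_of_le hk.2 (hJM n)

/-- the key splitting identity for pairs -/
lemma abs_min_add_abs_max (t a b : ℝ) :
    |min a t - min b t| + |max a t - max b t| = |a - b| := by
  wlog h : b ≤ a with H
  · push_neg at h
    rw [abs_sub_comm (min a t), abs_sub_comm (max a t), abs_sub_comm a]
    exact H t b a h.le
  rcases le_total a t with h1 | h1 <;> rcases le_total b t with h2 | h2
  · rw [min_eq_left h1, min_eq_left h2, max_eq_right h1, max_eq_right h2]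
    simp
  · rw [min_eq_left h1, min_eq_right h2, max_eq_right h1, max_eq_left h2,
      abs_of_nonpos (by linarith), abs_of_nonpos (by linarith), abs_of_nonneg (by linarith)]
    linarith
  · rw [min_eq_right h1, min_eq_left h2, max_eq_left h1, max_eq_right h2,
      abs_of_nonneg (by linarith), abs_of_nonneg (by linarith), abs_of_nonneg (by linarith)]
    ring
  · rw [min_eq_right h1, min_eq_right h2, max_eq_left h1, max_eq_left h2]
    simp






lemma edist_min_add_edist_max (t a b : ℝ) :
    edist (min a t) (min b t) + edist (max a t) (max b t) = edist a b := by
  rw [edist_dist, edist_dist, edist_dist, Real.dist_eq, Real.dist_eq, Real.dist_eq,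
    ← ENNReal.ofReal_add (abs_nonneg _) (abs_nonneg _), abs_min_add_abs_max]

lemma lipschitz_add_const (c : ℝ) : LipschitzWith 1 (fun x : ℝ => x + c) := by
  refine LipschitzWith.of_dist_le_mul fun x y => ?_
  simp [Real.dist_eq]

lemma evar_comp_le_of_lip {φ : ℝ → ℝ} (hφ : LipschitzWith 1 φ) (v : ℝ → ℝ) (s : Set ℝ) :
    eVariationOn (fun x => φ (v x)) s ≤ eVariationOn v s := by
  have := hφ.lipschitzOnWith (s := univ)
  have h2 := this.comp_eVariationOn_le (mapsTo_univ v s)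
  simpa [Function.comp_def] using h2

lemma evar_min_le (v : ℝ → ℝ) (t : ℝ) (s : Set ℝ) :
    eVariationOn (fun x => min (v x) t) s ≤ eVariationOn v s :=
  evar_comp_le_of_lip (LipschitzWith.id.min_const t) v s

lemma evar_max_le (v : ℝ → ℝ) (t : ℝ) (s : Set ℝ) :
    eVariationOn (fun x => max (v x) t) s ≤ eVariationOn v s :=
  evar_comp_le_of_lip (LipschitzWith.id.max_const t) v s

lemma evar_add_const (v : ℝ → ℝ) (c : ℝ) (s : Set ℝ) :
    eVariationOn (fun x => v x + c) s = eVariationOn v s := by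
  refine le_antisymm (evar_comp_le_of_lip (lipschitz_add_const c) v s) ?_
  have := evar_comp_le_of_lip (lipschitz_add_const (-c)) (fun x => v x + c) s
  simpa using this

lemma evar_add_le (v w : ℝ → ℝ) (s : Set ℝ) :
    eVariationOn (fun x => v x + w x) s ≤ eVariationOn v s + eVariationOn w s := by
  rw [eVariationOn]
  refine iSup_le ?_
  rintro ⟨n, ⟨p, hp, hps⟩⟩
  calc ∑ i ∈ Finset.range n, edist (v (p (i+1)) + w (p (i+1))) (v (p i) + w (p i))
      ≤ ∑ i ∈ Finset.range n, (edist (v (p (i+1))) (v (p i)) + edist (w (p (i+1))) (w (p i))) :=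
        Finset.sum_le_sum fun i _ => edist_add_add_le _ _ _ _
    _ = (∑ i ∈ Finset.range n, edist (v (p (i+1))) (v (p i)))
        + ∑ i ∈ Finset.range n, edist (w (p (i+1))) (w (p i)) := Finset.sum_add_distrib
    _ ≤ _ := add_le_add (eVariationOn.sum_le (f := v) (n := n) hp hps) (eVariationOn.sum_le (f := w) (n := n) hp hps)

/-- THE MERGE LEMMA: variation splits (super)additively at a level `t`. -/
lemma evar_min_add_max (v : ℝ → ℝ) (t : ℝ) (s : Set ℝ) :
    eVariationOn (fun x => min (v x) t) s + eVariationOn (fun x => max (v x) t) s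
      ≤ eVariationOn v s := by
  rcases eq_empty_or_nonempty s with rfl | hs
  · simp
  haveI : Nonempty { u // Monotone u ∧ ∀ i : ℕ, u i ∈ s } :=
    eVariationOn.nonempty_monotone_mem hs
  rw [eVariationOn, eVariationOn, ENNReal.iSup_add]
  refine iSup_le ?_
  rintro ⟨n1, ⟨u1, hu1, hu1s⟩⟩
  rw [ENNReal.add_iSup]
  refine iSup_le ?_
  rintro ⟨n2, ⟨u2, hu2, hu2s⟩⟩
  -- totalized partitions
  set q1 : ℕ → ℝ := fun i => u1 (min i n1) with hq1
  set q2 : ℕ → ℝ := fun i => u2 (min i n2) with hq2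
  have hq1mono : Monotone q1 := fun i j hij => hu1 (min_le_min hij le_rfl)
  have hq2mono : Monotone q2 := fun i j hij => hu2 (min_le_min hij le_rfl)
  -- the merged partition
  set A : Finset ℝ := ((Finset.range (n1+1)).image q1) ∪ ((Finset.range (n2+1)).image q2) with hA
  have hq1A : ∀ i, q1 i ∈ A := by
    intro i
    refine Finset.mem_union_left _ (Finset.mem_image.2 ⟨min i n1, Finset.mem_range.2 (by omega), ?_⟩)
    simp only [hq1, min_assoc, min_self]
  have hq2A : ∀ i, q2 i ∈ A := by
    intro i
    refine Finset.mem_union_right _ (Finset.mem_image.2 ⟨min i n2, Finset.mem_range.2 (by omega), ?_⟩)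
    simp only [hq2, min_assoc, min_self]
  have hAne : A.Nonempty := ⟨q1 0, hq1A 0⟩
  have hAs : ∀ x ∈ A, x ∈ s := by
    intro x hx
    simp only [hA, Finset.mem_union, Finset.mem_image, Finset.mem_range] at hx
    rcases hx with ⟨i, _, rfl⟩ | ⟨i, _, rfl⟩
    · exact hu1s _
    · exact hu2s _
  set L := A.sort (· ≤ ·) with hL
  have hmemL : ∀ x, x ∈ L ↔ x ∈ A := fun x => Finset.mem_sort _
  set r : ℕ → ℝ := fun k => if h : k < L.length then L.get ⟨k, h⟩ else A.max' hAne with hr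
  have hrA : ∀ k, r k ∈ A := by
    intro k
    simp only [hr]
    split_ifs with h
    · exact (hmemL _).1 (L.get_mem _)
    · exact A.max'_mem hAne
  have hrs : ∀ k, r k ∈ s := fun k => hAs _ (hrA k)
  have hrmono : Monotone r := by
    intro k k' hkk'
    simp only [hr]
    split_ifs with h h' h'
    · exact (Finset.pairwise_sort A (· ≤ ·)).rel_get_of_le (by exact hkk')
    · exact Finset.le_max' A _ ((hmemL _).1 (L.get_mem _))
    · omega
    · exact le_rfl
  have cover1 : ∀ i, ∃ j, j ≤ L.length ∧ r j = q1 i := by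
    intro i
    obtain ⟨j, hj⟩ := List.mem_iff_get.1 ((hmemL _).2 (hq1A i))
    exact ⟨j.1, le_of_lt j.2, by simp only [hr, dif_pos j.2]; exact hj⟩
  have cover2 : ∀ i, ∃ j, j ≤ L.length ∧ r j = q2 i := by
    intro i
    obtain ⟨j, hj⟩ := List.mem_iff_get.1 ((hmemL _).2 (hq2A i))
    exact ⟨j.1, le_of_lt j.2, by simp only [hr, dif_pos j.2]; exact hj⟩
  have e1 : ∑ i ∈ Finset.range n1, edist (min (v (u1 (i+1))) t) (min (v (u1 i)) t)
      = ∑ i ∈ Finset.range n1, edist (min (v (q1 (i+1))) t) (min (v (q1 i)) t) := by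
    refine Finset.sum_congr rfl fun i hi => ?_
    have hi' := Finset.mem_range.1 hi
    simp only [hq1, min_eq_left (by omega : i + 1 ≤ n1), min_eq_left (by omega : i ≤ n1)]
  have e2 : ∑ i ∈ Finset.range n2, edist (max (v (u2 (i+1))) t) (max (v (u2 i)) t)
      = ∑ i ∈ Finset.range n2, edist (max (v (q2 (i+1))) t) (max (v (q2 i)) t) := by
    refine Finset.sum_congr rfl fun i hi => ?_
    have hi' := Finset.mem_range.1 hi
    simp only [hq2, min_eq_left (by omega : i + 1 ≤ n2), min_eq_left (by omega : i ≤ n2)]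
  show (∑ i ∈ Finset.range n1, edist (min (v (u1 (i+1))) t) (min (v (u1 i)) t))
      + ∑ i ∈ Finset.range n2, edist (max (v (u2 (i+1))) t) (max (v (u2 i)) t)
      ≤ eVariationOn v s
  rw [e1, e2]
  calc (∑ i ∈ Finset.range n1, edist (min (v (q1 (i+1))) t) (min (v (q1 i)) t))
      + ∑ i ∈ Finset.range n2, edist (max (v (q2 (i+1))) t) (max (v (q2 i)) t)
      ≤ (∑ k ∈ Finset.range L.length,
            edist (min (v (r (k+1))) t) (min (v (r k)) t))
        + ∑ k ∈ Finset.range L.length,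
            edist (max (v (r (k+1))) t) (max (v (r k)) t) := by
        exact add_le_add
          (sum_le_refine (fun x => min (v x) t) hq1mono hrmono n1 L.length cover1)
          (sum_le_refine (fun x => max (v x) t) hq2mono hrmono n2 L.length cover2)
    _ = ∑ k ∈ Finset.range L.length,
          (edist (min (v (r (k+1))) t) (min (v (r k)) t)
            + edist (max (v (r (k+1))) t) (max (v (r k)) t)) := Finset.sum_add_distrib.symm
    _ = ∑ k ∈ Finset.range L.length, edist (v (r (k+1))) (v (r k)) :=
        Finset.sum_congr rfl fun k _ => edist_min_add_edist_max t _ _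
    _ ≤ eVariationOn v s := eVariationOn.sum_le (f := v) (n := L.length) hrmono hrs




noncomputable def Iu : Set ℝ := Ioo 0 1
noncomputable def muI : Measure ℝ := volume.restrict (Ioo (0:ℝ) 1)

instance : IsFiniteMeasure muI := by
  constructor
  rw [muI, Measure.restrict_apply_univ, Real.volume_Ioo]
  simp

lemma integrable_of_bd {v : ℝ → ℝ} (C : ℝ) (hm : AEStronglyMeasurable v muI)
    (hb : ∀ᵐ x ∂muI, |v x| ≤ C) : Integrable v muI := by
  refine ⟨hm, ?_⟩
  exact MeasureTheory.HasFiniteIntegral.of_bounded (C := C) (by simpa [Real.norm_eq_abs] using hb)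

lemma fmeas {f : ℝ → ℝ} (hfBV : BoundedVariationOn f (Ioo 0 1)) :
    AEMeasurable f muI := by
  obtain ⟨p, q, hp, hq, hpq⟩ :=
    hfBV.locallyBoundedVariationOn.exists_monotoneOn_sub_monotoneOn
  have h1 : AEMeasurable p muI := aemeasurable_restrict_of_monotoneOn measurableSet_Ioo hp
  have h2 : AEMeasurable q muI := aemeasurable_restrict_of_monotoneOn measurableSet_Ioo hq
  rw [hpq]
  exact h1.sub h2

lemma slope_tendsto {h : ℝ → ℝ} {s : ℝ} (hd : DifferentiableAt ℝ h s) :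
    Filter.Tendsto (fun n : ℕ => (n : ℝ) * (h (s + 1 / n) - h s)) Filter.atTop
      (nhds (deriv h s)) := by
  have hslope := hasDerivAt_iff_tendsto_slope.1 hd.hasDerivAt
  have htend : Filter.Tendsto (fun n : ℕ => s + 1 / n) Filter.atTop (nhdsWithin s {s}ᶜ) := by
    apply tendsto_nhdsWithin_of_tendsto_nhds_of_eventually_within
    · have : Filter.Tendsto (fun n : ℕ => 1 / (n:ℝ)) Filter.atTop (nhds 0) := by
        exact tendsto_one_div_atTop_nhds_zero_nat
      have := this.const_add s
      simpa using this
    · filter_upwards [Filter.eventually_gt_atTop 0] with n hn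
      have : (0:ℝ) < 1 / n := by positivity
      simp only [mem_compl_iff, mem_singleton_iff]
      intro hcon
      nlinarith [hcon]
  have := hslope.comp htend
  have heq : ∀ᶠ n : ℕ in Filter.atTop,
      slope h s (s + 1 / n) = (n : ℝ) * (h (s + 1 / n) - h s) := by
    filter_upwards [Filter.eventually_gt_atTop 0] with n hn
    have hne : (1:ℝ) / n ≠ 0 := by positivity
    rw [slope_def_field]
    field_simp
    ring
  exact Filter.Tendsto.congr' heq this

lemma ftc_antitone_lip {h : ℝ → ℝ} {Λ : ℝ} (hΛ : 0 ≤ Λ) (hanti : Antitone h)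
    (hlip : ∀ s t : ℝ, s ≤ t → h s - h t ≤ Λ * (t - s))
    (hconst : ∀ t, 1 ≤ t → h t = h 1) :
    ∫ s in Ioo (0:ℝ) 1, deriv h s = h 1 - h 0 := by
  have hlipW : LipschitzWith (Real.toNNReal Λ) h := by
    refine LipschitzWith.of_dist_le_mul fun x y => ?_
    rcases le_total x y with hxy | hxy
    · rw [Real.dist_eq, Real.dist_eq, abs_of_nonneg (by linarith [hanti hxy]),
        abs_of_nonpos (by linarith), Real.coe_toNNReal _ hΛ]
      have := hlip x y hxy
      linarith
    · rw [Real.dist_eq, Real.dist_eq, abs_of_nonpos (by linarith [hanti hxy]),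
        abs_of_nonneg (by linarith), Real.coe_toNNReal _ hΛ]
      have := hlip y x hxy
      linarith
  have hcont : Continuous h := hlipW.continuous
  have hdiff : ∀ᵐ s ∂muI, DifferentiableAt ℝ h s :=
    ae_restrict_of_ae hlipW.ae_differentiableAt_real
  -- dominated convergence
  set q : ℕ → ℝ → ℝ := fun n s => (n : ℝ) * (h (s + 1 / n) - h s) with hq
  have hqcont : ∀ n, Continuous (q n) := by
    intro n
    exact continuous_const.mul ((hcont.comp (continuous_id.add continuous_const)).sub hcont)
  have hDCT : Filter.Tendsto (fun n => ∫ s, q n s ∂muI) Filter.atTop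
      (nhds (∫ s, deriv h s ∂muI)) := by
    refine MeasureTheory.tendsto_integral_of_dominated_convergence (fun _ => Λ)
      (fun n => (hqcont n).aestronglyMeasurable) ?_ ?_ ?_
    · exact (integrable_const Λ)
    · intro n
      refine Filter.Eventually.of_forall fun s => ?_
      rcases Nat.eq_zero_or_pos n with rfl | hn
      · simp [hq, hΛ]
      · have hn' : (0:ℝ) < n := by exact_mod_cast hn
        have hsn : s ≤ s + 1 / n := le_add_of_nonneg_right (by positivity)
        have h1 : h (s + 1 / n) ≤ h s := hanti hsn
        have h2 : h s - h (s + 1 / n) ≤ Λ * (1 / n) := by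
          have := hlip s (s + 1 / n) hsn
          simpa using this
        rw [Real.norm_eq_abs, hq]
        rw [abs_mul, abs_of_nonneg (le_of_lt hn'), abs_of_nonpos (by linarith)]
        rw [neg_sub]
        calc (n:ℝ) * (h s - h (s + 1/n)) ≤ (n:ℝ) * (Λ * (1/n)) := by
              exact mul_le_mul_of_nonneg_left h2 (le_of_lt hn')
          _ = Λ := by field_simp
    · filter_upwards [hdiff] with s hs
      exact slope_tendsto hs
  · -- compute the integrals
    have hInt : ∀ a b : ℝ, IntervalIntegrable h volume a b := fun a b =>
      hcont.intervalIntegrable a b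
    have hcomp : ∀ n : ℕ, 1 ≤ n → ∫ s, q n s ∂muI = h 1 - (n:ℝ) * ∫ s in (0:ℝ)..(1/n), h s := by
      intro n hn
      have hn' : (0:ℝ) < n := by exact_mod_cast hn
      have hio : ∫ s, q n s ∂muI = ∫ s in (0:ℝ)..(1:ℝ), q n s := by
        rw [intervalIntegral.integral_of_le (by norm_num : (0:ℝ) ≤ 1), muI,
          ← MeasureTheory.integral_Ioc_eq_integral_Ioo]
      rw [hio]
      have e1 : ∫ s in (0:ℝ)..(1:ℝ), q n s
          = (n:ℝ) * ((∫ s in (0:ℝ)..(1:ℝ), h (s + 1/n)) - ∫ s in (0:ℝ)..(1:ℝ), h s) := by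
        show (∫ s in (0:ℝ)..(1:ℝ), (n:ℝ) * (h (s + 1/n) - h s)) = _
        rw [intervalIntegral.integral_const_mul]
        congr 1
        exact intervalIntegral.integral_sub
          ((hcont.comp (continuous_id.add continuous_const)).intervalIntegrable 0 1)
          (hcont.intervalIntegrable 0 1)
      rw [e1]
      have e2 : (∫ s in (0:ℝ)..(1:ℝ), h (s + 1/n)) = ∫ s in (1/(n:ℝ))..(1 + 1/n), h s := by
        have := intervalIntegral.integral_comp_add_right (a := (0:ℝ)) (b := 1) (d := 1/(n:ℝ)) h
        simpa using this
      have h1n : (1:ℝ)/n ≤ 1 := by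
        rw [div_le_one hn']
        exact_mod_cast hn
      have e3 : (∫ s in (1/(n:ℝ))..(1 + 1/n), h s)
          = (∫ s in (1/(n:ℝ))..(1:ℝ), h s) + ∫ s in (1:ℝ)..(1 + 1/n), h s :=
        (intervalIntegral.integral_add_adjacent_intervals (hInt _ _) (hInt _ _)).symm
      have e4 : (∫ s in (0:ℝ)..(1:ℝ), h s)
          = (∫ s in (0:ℝ)..(1/(n:ℝ)), h s) + ∫ s in (1/(n:ℝ))..(1:ℝ), h s :=
        (intervalIntegral.integral_add_adjacent_intervals (hInt _ _) (hInt _ _)).symm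
      have e5 : (∫ s in (1:ℝ)..(1 + 1/n), h s) = (1/(n:ℝ)) * h 1 := by
        have : EqOn h (fun _ => h 1) (uIcc (1:ℝ) (1 + 1/n)) := by
          intro x hx
          rw [uIcc_of_le (by linarith [one_div_nonneg.mpr (le_of_lt hn')] : (1:ℝ) ≤ 1 + 1/n)] at hx
          exact hconst x hx.1
        rw [intervalIntegral.integral_congr this]
        simp
      rw [e2, e3, e4, e5]
      field_simp
      ring
    have hsq : Filter.Tendsto (fun n : ℕ => (n:ℝ) * ∫ s in (0:ℝ)..(1/n), h s)
        Filter.atTop (nhds (h 0)) := by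
      have hub : ∀ n : ℕ, 1 ≤ n → (n:ℝ) * ∫ s in (0:ℝ)..(1/n), h s ≤ h 0 := by
        intro n hn
        have hn' : (0:ℝ) < n := by exact_mod_cast hn
        have : (∫ s in (0:ℝ)..(1/n), h s) ≤ ∫ s in (0:ℝ)..(1/n), (fun _ => h 0) s := by
          refine intervalIntegral.integral_mono_on (by positivity) (hInt _ _)
            (intervalIntegrable_const) fun x hx => hanti hx.1
        simp only [intervalIntegral.integral_const, smul_eq_mul, sub_zero] at this
        calc (n:ℝ) * ∫ s in (0:ℝ)..(1/n), h s ≤ (n:ℝ) * ((1/n) * h 0) := by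
              exact mul_le_mul_of_nonneg_left this (le_of_lt hn')
          _ = h 0 := by field_simp
      have hlb : ∀ n : ℕ, 1 ≤ n → h (1/(n:ℝ)) ≤ (n:ℝ) * ∫ s in (0:ℝ)..(1/n), h s := by
        intro n hn
        have hn' : (0:ℝ) < n := by exact_mod_cast hn
        have : (∫ s in (0:ℝ)..(1/n), (fun _ => h (1/(n:ℝ))) s) ≤ ∫ s in (0:ℝ)..(1/n), h s := by
          refine intervalIntegral.integral_mono_on (by positivity) (intervalIntegrable_const)
            (hInt _ _) fun x hx => hanti hx.2
        simp only [intervalIntegral.integral_const, smul_eq_mul, sub_zero] at this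
        calc h (1/(n:ℝ)) = (n:ℝ) * ((1/n) * h (1/(n:ℝ))) := by field_simp
          _ ≤ (n:ℝ) * ∫ s in (0:ℝ)..(1/n), h s := by
              exact mul_le_mul_of_nonneg_left this (le_of_lt hn')
      have hlim1 : Filter.Tendsto (fun n : ℕ => h (1/(n:ℝ))) Filter.atTop (nhds (h 0)) := by
        have h0 : Filter.Tendsto (fun n : ℕ => 1 / (n:ℝ)) Filter.atTop (nhds 0) := by
          exact tendsto_one_div_atTop_nhds_zero_nat
        exact (hcont.tendsto 0).comp h0
      refine tendsto_of_tendsto_of_tendsto_of_le_of_le' hlim1 tendsto_const_nhds ?_ ?_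
      · filter_upwards [Filter.eventually_ge_atTop 1] with n hn using hlb n hn
      · filter_upwards [Filter.eventually_ge_atTop 1] with n hn using hub n hn
    have : Filter.Tendsto (fun n => ∫ s, q n s ∂muI) Filter.atTop (nhds (h 1 - h 0)) := by
      have := (tendsto_const_nhds (x := h 1) (f := Filter.atTop (α := ℕ))).sub hsq
      refine Filter.Tendsto.congr' ?_ this
      filter_upwards [Filter.eventually_ge_atTop 1] with n hn
      exact (hcomp n hn).symm
    have := tendsto_nhds_unique hDCT this
    rw [muI] at this
    exact this






lemma muI_univ : muI univ = 1 := by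
  rw [muI, Measure.restrict_apply_univ, Real.volume_Ioo]
  norm_num



/-- the fidelity integral -/
noncomputable def FidR (f v : ℝ → ℝ) (d₁ d₂ : ℝ) : ℝ :=
  ∫ x, (v x * (d₁ - f x)^2 + (1 - v x) * (d₂ - f x)^2) ∂muI

/-- the real-valued energy -/
noncomputable def EE (lam : ℝ) (f v : ℝ → ℝ) (d₁ d₂ : ℝ) : ℝ :=
  (eVariationOn v (Ioo 0 1)).toReal + lam * FidR f v d₁ d₂

section basic
variable {f : ℝ → ℝ}

lemma f_ae_mem (hf01 : ∀ x ∈ Ioo (0:ℝ) 1, f x ∈ Icc (0:ℝ) 1) :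
    ∀ᵐ x ∂muI, f x ∈ Icc (0:ℝ) 1 := by
  rw [muI]
  filter_upwards [ae_restrict_mem measurableSet_Ioo] with x hx using hf01 x hx

lemma fid_integrable (hf : AEMeasurable f muI) (hf01 : ∀ x ∈ Ioo (0:ℝ) 1, f x ∈ Icc (0:ℝ) 1)
    {v : ℝ → ℝ} (hv : AEStronglyMeasurable v muI) (hvb : ∀ x, v x ∈ Icc (0:ℝ) 1)
    {d₁ d₂ : ℝ} (hd₁ : d₁ ∈ Icc (0:ℝ) 1) (hd₂ : d₂ ∈ Icc (0:ℝ) 1) :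
    Integrable (fun x => v x * (d₁ - f x)^2 + (1 - v x) * (d₂ - f x)^2) muI := by
  refine integrable_of_bd 2 ?_ ?_
  · apply AEMeasurable.aestronglyMeasurable
    exact (hv.aemeasurable.mul ((aemeasurable_const.sub hf).pow aemeasurable_const)).add
      ((aemeasurable_const.sub hv.aemeasurable).mul
        ((aemeasurable_const.sub hf).pow aemeasurable_const))
  · filter_upwards [f_ae_mem hf01] with x hfx
    obtain ⟨hv0, hv1⟩ := hvb x
    obtain ⟨hf0, hf1⟩ := hfx
    rw [abs_le]
    constructor <;> nlinarith [sq_nonneg (d₁ - f x), sq_nonneg (d₂ - f x), hd₁.1, hd₁.2, hd₂.1, hd₂.2]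

lemma fid_nonneg {v : ℝ → ℝ} (hvb : ∀ x, v x ∈ Icc (0:ℝ) 1) {d₁ d₂ : ℝ} :
    0 ≤ FidR f v d₁ d₂ := by
  refine integral_nonneg fun x => ?_
  have h1 := (hvb x).1
  have h2 := (hvb x).2
  show (0:ℝ) ≤ v x * (d₁ - f x)^2 + (1 - v x) * (d₂ - f x)^2
  nlinarith [sq_nonneg (d₁ - f x), sq_nonneg (d₂ - f x)]

/-- computation of `Fcv` in terms of the real energy -/
lemma Fcv_eq_ofReal {lam : ℝ} (hlam : 0 ≤ lam) (hf : AEMeasurable f muI)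
    (hf01 : ∀ x ∈ Ioo (0:ℝ) 1, f x ∈ Icc (0:ℝ) 1)
    {v : ℝ → ℝ} (hv : AEStronglyMeasurable v muI) (hvb : ∀ x, v x ∈ Icc (0:ℝ) 1)
    (hVar : eVariationOn v (Ioo 0 1) ≠ ⊤)
    {d₁ d₂ : ℝ} (hd₁ : d₁ ∈ Icc (0:ℝ) 1) (hd₂ : d₂ ∈ Icc (0:ℝ) 1) :
    Fcv lam f v d₁ d₂ = ENNReal.ofReal (EE lam f v d₁ d₂) := by
  have hind : (∫⁻ x in Ioo (0:ℝ) 1, (if v x ∈ Icc (0:ℝ) 1 then 0 else ⊤)) = 0 := by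
    have h : ∀ x, (if v x ∈ Icc (0:ℝ) 1 then (0:ℝ≥0∞) else ⊤) = 0 := fun x => if_pos (hvb x)
    simp only [h]
    simp
  have hfid : (∫⁻ x in Ioo (0:ℝ) 1,
      ENNReal.ofReal (v x * (d₁ - f x) ^ 2 + (1 - v x) * (d₂ - f x) ^ 2))
      = ENNReal.ofReal (FidR f v d₁ d₂) := by
    have h1 := MeasureTheory.ofReal_integral_eq_lintegral_ofReal
      (fid_integrable hf hf01 hv hvb hd₁ hd₂) (Filter.Eventually.of_forall fun x => by
        have h1 := (hvb x).1
        have h2 := (hvb x).2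
        show (0:ℝ) ≤ v x * (d₁ - f x)^2 + (1 - v x) * (d₂ - f x)^2
        nlinarith [sq_nonneg (d₁ - f x), sq_nonneg (d₂ - f x)])
    rw [FidR, h1, muI]
  rw [Fcv, hind, add_zero, hfid, EE,
    ENNReal.ofReal_add ENNReal.toReal_nonneg (mul_nonneg hlam (fid_nonneg hvb)),
    ENNReal.ofReal_toReal hVar, ENNReal.ofReal_mul hlam]

end basic



noncomputable def Gg (f : ℝ → ℝ) (c₁ c₂ : ℝ) : ℝ → ℝ := fun x => (c₁ - f x)^2 - (c₂ - f x)^2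

section core
variable {lam : ℝ} {f w : ℝ → ℝ} {c₁ c₂ : ℝ}

lemma Gg_meas (hf : AEMeasurable f muI) : AEMeasurable (Gg f c₁ c₂) muI :=
  (((aemeasurable_const.sub hf).pow aemeasurable_const).sub
    ((aemeasurable_const.sub hf).pow aemeasurable_const))

lemma Gg_bd (hf01 : ∀ x ∈ Ioo (0:ℝ) 1, f x ∈ Icc (0:ℝ) 1)
    (hc₁ : c₁ ∈ Icc (0:ℝ) 1) (hc₂ : c₂ ∈ Icc (0:ℝ) 1) :
    ∀ᵐ x ∂muI, |Gg f c₁ c₂ x| ≤ 1 := by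
  filter_upwards [f_ae_mem hf01] with x hx
  obtain ⟨h0, h1⟩ := hx
  rw [Gg, abs_le]
  constructor <;> nlinarith [hc₁.1, hc₁.2, hc₂.1, hc₂.2, sq_nonneg (c₁ - f x), sq_nonneg (c₂ - f x)]

lemma min_meas (hwm : AEStronglyMeasurable w muI) (t : ℝ) :
    AEStronglyMeasurable (fun x => min (w x) t) muI :=
  (hwm.aemeasurable.min aemeasurable_const).aestronglyMeasurable

lemma evar_min_fin (hVw : eVariationOn w (Ioo 0 1) ≠ ⊤) (t : ℝ) :
    eVariationOn (fun x => min (w x) t) (Ioo 0 1) ≠ ⊤ :=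
  ne_top_of_le_ne_top hVw (evar_min_le w t _)

/-- the exact slicing of variation between levels `s ≤ t` -/
lemma evar_slice (hwb : ∀ x, w x ∈ Icc (0:ℝ) 1) {s t : ℝ} (hst : s ≤ t) :
    eVariationOn (fun x => min (w x) t) (Ioo 0 1)
      = eVariationOn (fun x => min (w x) s) (Ioo 0 1)
        + eVariationOn (fun x => min (w x) t - min (w x) s) (Ioo 0 1) := by
  refine le_antisymm ?_ ?_
  · have hdec : (fun x : ℝ => min (w x) t)
        = fun x => min (w x) s + (min (w x) t - min (w x) s) := by
      funext x; ring
    conv_lhs => rw [hdec]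
    exact evar_add_le _ _ _
  · have h1 := evar_min_add_max (fun x => min (w x) t) s (Ioo 0 1)
    have e1 : (fun x : ℝ => min (min (w x) t) s) = fun x => min (w x) s := by
      funext x
      rw [min_assoc, min_eq_right hst]
    have e2 : (fun x : ℝ => max (min (w x) t) s)
        = fun x => (min (w x) t - min (w x) s) + s := by
      funext x
      rcases le_total (w x) s with h | h
      · rw [min_eq_left (le_trans h hst), min_eq_left h, max_eq_right h]; ring
      · rw [min_eq_right h, max_eq_left (le_min h hst)]
        ring
    rw [e1, e2, evar_add_const] at h1
    exact h1

end core

noncomputable def KK (f : ℝ → ℝ) (c₂ : ℝ) : ℝ := ∫ x, (c₂ - f x)^2 ∂muI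

section core2
variable {lam : ℝ} {f w : ℝ → ℝ} {c₁ c₂ : ℝ}

lemma m_bounds {s t : ℝ} (hst : s ≤ t) (a : ℝ) :
    0 ≤ min a t - min a s ∧ min a t - min a s ≤ t - s := by
  rcases le_total a s with h | h
  · rw [min_eq_left h, min_eq_left (h.trans hst)]
    constructor <;> linarith
  · rw [min_eq_right h]
    rcases le_total a t with h2 | h2
    · rw [min_eq_left h2]
      constructor <;> linarith
    · rw [min_eq_right h2]
      constructor <;> linarith

lemma int_vG (hf : AEMeasurable f muI) (hf01 : ∀ x ∈ Ioo (0:ℝ) 1, f x ∈ Icc (0:ℝ) 1)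
    (hc₁ : c₁ ∈ Icc (0:ℝ) 1) (hc₂ : c₂ ∈ Icc (0:ℝ) 1)
    {v : ℝ → ℝ} (hv : AEMeasurable v muI) (hvb : ∀ x, |v x| ≤ 1) :
    Integrable (fun x => v x * Gg f c₁ c₂ x) muI := by
  refine integrable_of_bd 1 (hv.mul (Gg_meas hf)).aestronglyMeasurable ?_
  filter_upwards [Gg_bd hf01 hc₁ hc₂] with x hG
  rw [abs_mul]
  calc |v x| * |Gg f c₁ c₂ x| ≤ 1 * 1 := by
        exact mul_le_mul (hvb x) hG (abs_nonneg _) zero_le_one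
    _ = 1 := by norm_num

lemma abs_int_le (hf : AEMeasurable f muI) (hf01 : ∀ x ∈ Ioo (0:ℝ) 1, f x ∈ Icc (0:ℝ) 1)
    (hc₁ : c₁ ∈ Icc (0:ℝ) 1) (hc₂ : c₂ ∈ Icc (0:ℝ) 1)
    {v : ℝ → ℝ} (hv : AEMeasurable v muI) {C : ℝ} (hC : 0 ≤ C) (hvb : ∀ x, |v x| ≤ C) :
    |∫ x, v x * Gg f c₁ c₂ x ∂muI| ≤ C := by
  have hint : Integrable (fun x => v x * Gg f c₁ c₂ x) muI := by
    refine integrable_of_bd C (hv.mul (Gg_meas hf)).aestronglyMeasurable ?_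
    filter_upwards [Gg_bd hf01 hc₁ hc₂] with x hG
    rw [abs_mul]
    calc |v x| * |Gg f c₁ c₂ x| ≤ C * 1 := by
          exact mul_le_mul (hvb x) hG (abs_nonneg _) hC
      _ = C := by norm_num
  calc |∫ x, v x * Gg f c₁ c₂ x ∂muI| ≤ ∫ x, |v x * Gg f c₁ c₂ x| ∂muI := by
        simpa only [Real.norm_eq_abs] using norm_integral_le_integral_norm (fun x => v x * Gg f c₁ c₂ x) (μ := muI)
    _ ≤ ∫ _x, C ∂muI := by
        refine integral_mono_ae hint.abs (integrable_const C) ?_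
        filter_upwards [Gg_bd hf01 hc₁ hc₂] with x hG
        show |v x * Gg f c₁ c₂ x| ≤ C
        rw [abs_mul]
        calc |v x| * |Gg f c₁ c₂ x| ≤ C * 1 := mul_le_mul (hvb x) hG (abs_nonneg _) hC
          _ = C := by norm_num
    _ = C := by
        rw [integral_const, measureReal_def, muI_univ]
        simp

lemma FidR_split (hf : AEMeasurable f muI) (hf01 : ∀ x ∈ Ioo (0:ℝ) 1, f x ∈ Icc (0:ℝ) 1)
    (hc₁ : c₁ ∈ Icc (0:ℝ) 1) (hc₂ : c₂ ∈ Icc (0:ℝ) 1)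
    {v : ℝ → ℝ} (hv : AEMeasurable v muI) (hvb : ∀ x, |v x| ≤ 1) :
    FidR f v c₁ c₂ = (∫ x, v x * Gg f c₁ c₂ x ∂muI) + KK f c₂ := by
  have hint1 : Integrable (fun x => v x * Gg f c₁ c₂ x) muI := int_vG hf hf01 hc₁ hc₂ hv hvb
  have hint2 : Integrable (fun x => (c₂ - f x)^2) muI := by
    refine integrable_of_bd 1 ((aemeasurable_const.sub hf).pow aemeasurable_const).aestronglyMeasurable ?_
    filter_upwards [f_ae_mem hf01] with x hx
    rw [abs_of_nonneg (sq_nonneg _)]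
    nlinarith [hx.1, hx.2, hc₂.1, hc₂.2]
  have heq : (fun x => v x * (c₁ - f x)^2 + (1 - v x) * (c₂ - f x)^2)
      = fun x => v x * Gg f c₁ c₂ x + (c₂ - f x)^2 := by
    funext x
    rw [Gg]
    ring
  rw [FidR, heq, integral_add hint1 hint2, KK]

/-- minimality implies the truncation map level is monotone (step down) -/
lemma step_le
    (hEmin : ∀ v d₁ d₂, AEStronglyMeasurable v muI → (∀ x, v x ∈ Icc (0:ℝ) 1) →
      eVariationOn v (Ioo 0 1) ≠ ⊤ → d₁ ∈ Icc (0:ℝ) 1 → d₂ ∈ Icc (0:ℝ) 1 →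
      EE lam f w c₁ c₂ ≤ EE lam f v d₁ d₂)
    (hlam : 0 < lam) (hf : AEMeasurable f muI)
    (hf01 : ∀ x ∈ Ioo (0:ℝ) 1, f x ∈ Icc (0:ℝ) 1)
    (hwm : AEStronglyMeasurable w muI) (hwb : ∀ x, w x ∈ Icc (0:ℝ) 1)
    (hVw : eVariationOn w (Ioo 0 1) ≠ ⊤)
    (hc₁ : c₁ ∈ Icc (0:ℝ) 1) (hc₂ : c₂ ∈ Icc (0:ℝ) 1)
    {s t : ℝ} (h0 : 0 ≤ s) (hst : s ≤ t) (h1 : t ≤ 1) :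
    (eVariationOn (fun x => min (w x) t) (Ioo 0 1)).toReal
        + lam * ∫ x, min (w x) t * Gg f c₁ c₂ x ∂muI
      ≤ (eVariationOn (fun x => min (w x) s) (Ioo 0 1)).toReal
        + lam * ∫ x, min (w x) s * Gg f c₁ c₂ x ∂muI := by
  set G := Gg f c₁ c₂ with hG
  set m : ℝ → ℝ := fun x => min (w x) t - min (w x) s with hm
  set v : ℝ → ℝ := fun x => w x - m x with hv
  have hmb : ∀ x, 0 ≤ m x ∧ m x ≤ t - s := fun x => m_bounds hst (w x)
  have hvb : ∀ x, v x ∈ Icc (0:ℝ) 1 := by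
    intro x
    have h1x := (hwb x).1
    have h2x := (hwb x).2
    have h3x := (hmb x).1
    have h4x := (hmb x).2
    constructor
    · simp only [hv, hm]
      rcases le_total (w x) s with h | h
      · rw [min_eq_left (h.trans hst), min_eq_left h]; linarith
      · rcases le_total (w x) t with h2 | h2
        · rw [min_eq_left h2, min_eq_right h]; linarith
        · rw [min_eq_right h2, min_eq_right h]
          linarith
    · simp only [hv]; linarith
  have hvm : AEStronglyMeasurable v muI := by
    apply AEMeasurable.aestronglyMeasurable
    exact hwm.aemeasurable.sub ((hwm.aemeasurable.min aemeasurable_const).sub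
      (hwm.aemeasurable.min aemeasurable_const))
  -- identity : v = min w s + (max w t - t)
  have hvid : v = fun x => min (w x) s + (max (w x) t + -t) := by
    funext x
    simp only [hv, hm]
    rcases le_total (w x) t with h | h
    · rw [min_eq_left h, max_eq_right h]; ring
    · rw [min_eq_right h, max_eq_left h, min_eq_right ((hst.trans h))]; ring
  have hVv_le : eVariationOn v (Ioo 0 1)
      ≤ eVariationOn (fun x => min (w x) s) (Ioo 0 1)
        + eVariationOn (fun x => max (w x) t) (Ioo 0 1) := by
    rw [hvid]
    refine le_trans (evar_add_le _ _ _) ?_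
    rw [evar_add_const]
  have hmax_fin : eVariationOn (fun x => max (w x) t) (Ioo 0 1) ≠ ⊤ :=
    ne_top_of_le_ne_top hVw (evar_max_le w t _)
  have hmin_fin_s : eVariationOn (fun x => min (w x) s) (Ioo 0 1) ≠ ⊤ := evar_min_fin hVw s
  have hmin_fin_t : eVariationOn (fun x => min (w x) t) (Ioo 0 1) ≠ ⊤ := evar_min_fin hVw t
  have hVv_fin : eVariationOn v (Ioo 0 1) ≠ ⊤ :=
    ne_top_of_le_ne_top (by rw [ENNReal.add_ne_top]; exact ⟨hmin_fin_s, hmax_fin⟩) hVv_le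
  -- slice identity
  have hslice := evar_slice (w := w) hwb hst
  have hm_fin : eVariationOn m (Ioo 0 1) ≠ ⊤ := by
    intro hcon
    rw [hm] at hcon
    rw [hcon, add_top] at hslice
    exact hmin_fin_t hslice
  -- apply minimality
  have hmin := hEmin v c₁ c₂ hvm hvb hVv_fin hc₁ hc₂
  -- fidelity difference
  have hmeas_m : AEMeasurable m muI :=
    (hwm.aemeasurable.min aemeasurable_const).sub (hwm.aemeasurable.min aemeasurable_const)
  have hmb1 : ∀ x, |m x| ≤ 1 := by
    intro x
    rw [abs_of_nonneg (hmb x).1]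
    calc m x ≤ t - s := (hmb x).2
      _ ≤ 1 := by linarith
  have hintm : Integrable (fun x => m x * G x) muI := int_vG hf hf01 hc₁ hc₂ hmeas_m hmb1
  have hFid : FidR f v c₁ c₂ = FidR f w c₁ c₂ - ∫ x, m x * G x ∂muI := by
    have hintw : Integrable (fun x => w x * (c₁ - f x)^2 + (1 - w x) * (c₂ - f x)^2) muI :=
      fid_integrable hf hf01 hwm hwb hc₁ hc₂
    have heq : (fun x => v x * (c₁ - f x)^2 + (1 - v x) * (c₂ - f x)^2)
        = fun x => (w x * (c₁ - f x)^2 + (1 - w x) * (c₂ - f x)^2) - m x * G x := by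
      funext x
      simp only [hv, hG, Gg]
      ring
    rw [FidR, heq, integral_sub hintw hintm, FidR]
  -- variation bookkeeping in ℝ
  have hVv_re : (eVariationOn v (Ioo 0 1)).toReal
      ≤ (eVariationOn (fun x => min (w x) s) (Ioo 0 1)).toReal
        + (eVariationOn (fun x => max (w x) t) (Ioo 0 1)).toReal := by
    rw [← ENNReal.toReal_add hmin_fin_s hmax_fin]
    exact ENNReal.toReal_mono (by rw [ENNReal.add_ne_top]; exact ⟨hmin_fin_s, hmax_fin⟩) hVv_le
  have hmerge : (eVariationOn (fun x => min (w x) t) (Ioo 0 1)).toReal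
      + (eVariationOn (fun x => max (w x) t) (Ioo 0 1)).toReal
      ≤ (eVariationOn w (Ioo 0 1)).toReal := by
    rw [← ENNReal.toReal_add hmin_fin_t hmax_fin]
    exact ENNReal.toReal_mono hVw (evar_min_add_max w t _)
  have hslice_re : (eVariationOn (fun x => min (w x) t) (Ioo 0 1)).toReal
      = (eVariationOn (fun x => min (w x) s) (Ioo 0 1)).toReal
        + (eVariationOn m (Ioo 0 1)).toReal := by
    rw [← ENNReal.toReal_add hmin_fin_s hm_fin, hslice, hm]
  have hm_nonneg : 0 ≤ (eVariationOn m (Ioo 0 1)).toReal := ENNReal.toReal_nonneg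
  -- integral of m G as difference
  have hiMm : ∫ x, m x * G x ∂muI
      = (∫ x, min (w x) t * G x ∂muI) - ∫ x, min (w x) s * G x ∂muI := by
    have h1' : Integrable (fun x => min (w x) t * G x) muI := by
      refine int_vG hf hf01 hc₁ hc₂ (hwm.aemeasurable.min aemeasurable_const) fun x => ?_
      rw [abs_le]
      constructor
      · have := (hwb x).1; rcases le_total (w x) t with h|h
        · rw [min_eq_left h]; linarith
        · rw [min_eq_right h]; linarith
      · rcases le_total (w x) t with h|h
        · rw [min_eq_left h]; exact (hwb x).2
        · rw [min_eq_right h]; linarith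
    have h2' : Integrable (fun x => min (w x) s * G x) muI := by
      refine int_vG hf hf01 hc₁ hc₂ (hwm.aemeasurable.min aemeasurable_const) fun x => ?_
      rw [abs_le]
      constructor
      · have := (hwb x).1; rcases le_total (w x) s with h|h
        · rw [min_eq_left h]; linarith
        · rw [min_eq_right h]; linarith
      · rcases le_total (w x) s with h|h
        · rw [min_eq_left h]; exact (hwb x).2
        · rw [min_eq_right h]; linarith
    have : (fun x => m x * G x) = fun x => min (w x) t * G x - min (w x) s * G x := by
      funext x; simp only [hm]; ring
    rw [this, integral_sub h1' h2']
  -- combine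
  rw [EE, EE, hFid] at hmin
  have hkey : lam * ∫ x, m x * G x ∂muI ≤ - (eVariationOn m (Ioo 0 1)).toReal := by
    nlinarith [hmin, hVv_re, hmerge, hslice_re]
  rw [hiMm] at hkey
  linarith [hslice_re, hkey]

end core2

noncomputable def cl (t : ℝ) : ℝ := max 0 (min t 1)

lemma cl_mem (t : ℝ) : cl t ∈ Icc (0:ℝ) 1 := by
  constructor
  · exact le_max_left _ _
  · rw [cl, max_le_iff]
    constructor
    · norm_num
    · exact min_le_right _ _

lemma cl_mono : Monotone cl := fun s t hst =>
  max_le_max le_rfl (min_le_min hst le_rfl)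

lemma cl_eq {t : ℝ} (h0 : 0 ≤ t) (h1 : t ≤ 1) : cl t = t := by
  rw [cl, min_eq_left h1, max_eq_right h0]

lemma cl_one_le {t : ℝ} (h : 1 ≤ t) : cl t = 1 := by
  rw [cl, min_eq_right h]
  norm_num

lemma cl_contract {s t : ℝ} (hst : s ≤ t) : cl t - cl s ≤ t - s := by
  simp only [cl, min_def, max_def]
  split_ifs <;> linarith

noncomputable def hfun (lam : ℝ) (f w : ℝ → ℝ) (c₁ c₂ : ℝ) : ℝ → ℝ := fun t =>
  (eVariationOn (fun x => min (w x) (cl t)) (Ioo 0 1)).toReal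
    + lam * ∫ x, min (w x) (cl t) * Gg f c₁ c₂ x ∂muI

section core3
variable {lam : ℝ} {f w : ℝ → ℝ} {c₁ c₂ : ℝ}

/-- reverse Lipschitz bound for the level energies -/
lemma step_ge (hf : AEMeasurable f muI) (hf01 : ∀ x ∈ Ioo (0:ℝ) 1, f x ∈ Icc (0:ℝ) 1)
    (hwm : AEStronglyMeasurable w muI) (hwb : ∀ x, w x ∈ Icc (0:ℝ) 1)
    (hVw : eVariationOn w (Ioo 0 1) ≠ ⊤)
    (hc₁ : c₁ ∈ Icc (0:ℝ) 1) (hc₂ : c₂ ∈ Icc (0:ℝ) 1) (hlam : 0 ≤ lam)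
    {s t : ℝ} (h0s : 0 ≤ s) (h1t : t ≤ 1) (hst : s ≤ t) :
    ((eVariationOn (fun x => min (w x) s) (Ioo 0 1)).toReal
        + lam * ∫ x, min (w x) s * Gg f c₁ c₂ x ∂muI)
      - ((eVariationOn (fun x => min (w x) t) (Ioo 0 1)).toReal
        + lam * ∫ x, min (w x) t * Gg f c₁ c₂ x ∂muI) ≤ lam * (t - s) := by
  set G := Gg f c₁ c₂ with hG
  set m : ℝ → ℝ := fun x => min (w x) t - min (w x) s with hm
  have hmin_fin_s : eVariationOn (fun x => min (w x) s) (Ioo 0 1) ≠ ⊤ := evar_min_fin hVw s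
  have hmin_fin_t : eVariationOn (fun x => min (w x) t) (Ioo 0 1) ≠ ⊤ := evar_min_fin hVw t
  have hslice := evar_slice (w := w) hwb hst
  have hm_fin : eVariationOn m (Ioo 0 1) ≠ ⊤ := by
    intro hcon
    rw [hm] at hcon
    rw [hcon, add_top] at hslice
    exact hmin_fin_t hslice
  have hslice_re : (eVariationOn (fun x => min (w x) t) (Ioo 0 1)).toReal
      = (eVariationOn (fun x => min (w x) s) (Ioo 0 1)).toReal
        + (eVariationOn m (Ioo 0 1)).toReal := by
    rw [← ENNReal.toReal_add hmin_fin_s hm_fin, hslice, hm]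
  have hmeas_m : AEMeasurable m muI :=
    (hwm.aemeasurable.min aemeasurable_const).sub (hwm.aemeasurable.min aemeasurable_const)
  have habs : |∫ x, m x * G x ∂muI| ≤ t - s := by
    refine abs_int_le hf hf01 hc₁ hc₂ hmeas_m (by linarith) fun x => ?_
    rw [abs_of_nonneg (m_bounds hst (w x)).1]
    exact (m_bounds hst (w x)).2
  have hiMm : ∫ x, m x * G x ∂muI
      = (∫ x, min (w x) t * G x ∂muI) - ∫ x, min (w x) s * G x ∂muI := by
    have h1' : Integrable (fun x => min (w x) t * G x) muI := by
      refine int_vG hf hf01 hc₁ hc₂ (hwm.aemeasurable.min aemeasurable_const) fun x => ?_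
      rw [abs_le]
      constructor
      · have := (hwb x).1; rcases le_total (w x) t with h|h
        · rw [min_eq_left h]; linarith
        · rw [min_eq_right h]; linarith [h0s.trans hst]
      · rcases le_total (w x) t with h|h
        · rw [min_eq_left h]; exact (hwb x).2
        · rw [min_eq_right h]; linarith [(hwb x).2, h1t]
    have h2' : Integrable (fun x => min (w x) s * G x) muI := by
      refine int_vG hf hf01 hc₁ hc₂ (hwm.aemeasurable.min aemeasurable_const) fun x => ?_
      rw [abs_le]
      constructor
      · have := (hwb x).1; rcases le_total (w x) s with h|h
        · rw [min_eq_left h]; linarith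
        · rw [min_eq_right h]; linarith [h0s]
      · rcases le_total (w x) s with h|h
        · rw [min_eq_left h]; exact (hwb x).2
        · rw [min_eq_right h]; linarith [(hwb x).2, hst.trans h1t]
    have : (fun x => m x * G x) = fun x => min (w x) t * G x - min (w x) s * G x := by
      funext x; simp only [hm]; ring
    rw [this, integral_sub h1' h2']
  have h1 : -(∫ x, m x * G x ∂muI) ≤ t - s := by
    have := neg_abs_le (∫ x, m x * G x ∂muI)
    linarith
  have h2 : lam * (-(∫ x, m x * G x ∂muI)) ≤ lam * (t - s) :=
    mul_le_mul_of_nonneg_left h1 hlam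
  have hm_nonneg : 0 ≤ (eVariationOn m (Ioo 0 1)).toReal := ENNReal.toReal_nonneg
  nlinarith [hslice_re, hiMm]

lemma hfun_antitone
    (hEmin : ∀ v d₁ d₂, AEStronglyMeasurable v muI → (∀ x, v x ∈ Icc (0:ℝ) 1) →
      eVariationOn v (Ioo 0 1) ≠ ⊤ → d₁ ∈ Icc (0:ℝ) 1 → d₂ ∈ Icc (0:ℝ) 1 →
      EE lam f w c₁ c₂ ≤ EE lam f v d₁ d₂)
    (hlam : 0 < lam) (hf : AEMeasurable f muI)
    (hf01 : ∀ x ∈ Ioo (0:ℝ) 1, f x ∈ Icc (0:ℝ) 1)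
    (hwm : AEStronglyMeasurable w muI) (hwb : ∀ x, w x ∈ Icc (0:ℝ) 1)
    (hVw : eVariationOn w (Ioo 0 1) ≠ ⊤)
    (hc₁ : c₁ ∈ Icc (0:ℝ) 1) (hc₂ : c₂ ∈ Icc (0:ℝ) 1) :
    Antitone (hfun lam f w c₁ c₂) := by
  intro s t hst
  exact step_le hEmin hlam hf hf01 hwm hwb hVw hc₁ hc₂
    (cl_mem s).1 (cl_mono hst) (cl_mem t).2

lemma hfun_lip (hf : AEMeasurable f muI) (hf01 : ∀ x ∈ Ioo (0:ℝ) 1, f x ∈ Icc (0:ℝ) 1)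
    (hwm : AEStronglyMeasurable w muI) (hwb : ∀ x, w x ∈ Icc (0:ℝ) 1)
    (hVw : eVariationOn w (Ioo 0 1) ≠ ⊤)
    (hc₁ : c₁ ∈ Icc (0:ℝ) 1) (hc₂ : c₂ ∈ Icc (0:ℝ) 1) (hlam : 0 ≤ lam) :
    ∀ s t : ℝ, s ≤ t → hfun lam f w c₁ c₂ s - hfun lam f w c₁ c₂ t ≤ lam * (t - s) := by
  intro s t hst
  have h := step_ge (w := w) hf hf01 hwm hwb hVw hc₁ hc₂ hlam (cl_mem s).1 (cl_mem t).2
    (cl_mono hst)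
  refine le_trans h ?_
  exact mul_le_mul_of_nonneg_left (cl_contract hst) hlam

lemma hfun_const (t : ℝ) (h : 1 ≤ t) : hfun lam f w c₁ c₂ t = hfun lam f w c₁ c₂ 1 := by
  unfold hfun
  rw [cl_one_le h, cl_one_le le_rfl]

lemma hfun_zero (hwb : ∀ x, w x ∈ Icc (0:ℝ) 1) : hfun lam f w c₁ c₂ 0 = 0 := by
  have h0 : cl 0 = 0 := by rw [cl]; norm_num
  have hmin : (fun x => min (w x) (cl 0)) = fun _ => (0:ℝ) := by
    funext x
    rw [h0, min_eq_right (hwb x).1]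
  have hmin2 : (fun x => min (w x) (cl 0) * Gg f c₁ c₂ x) = fun _ => (0:ℝ) := by
    funext x
    rw [h0, min_eq_right (hwb x).1, zero_mul]
  have hvar : eVariationOn (fun _ : ℝ => (0:ℝ)) (Ioo (0:ℝ) 1) = 0 := by
    apply eVariationOn.constant_on
    rintro x ⟨a, _, rfl⟩ y ⟨b, _, rfl⟩
    rfl
  rw [hfun, hmin, hmin2, hvar]
  simp

lemma hfun_one (hwb : ∀ x, w x ∈ Icc (0:ℝ) 1) :
    hfun lam f w c₁ c₂ 1 = (eVariationOn w (Ioo 0 1)).toReal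
      + lam * ∫ x, w x * Gg f c₁ c₂ x ∂muI := by
  have h1 : cl 1 = 1 := cl_one_le le_rfl
  have hmin : (fun x => min (w x) (cl 1)) = w := by
    funext x
    rw [h1, min_eq_left (hwb x).2]
  have hmin2 : (fun x => min (w x) (cl 1) * Gg f c₁ c₂ x) = fun x => w x * Gg f c₁ c₂ x := by
    funext x
    rw [h1, min_eq_left (hwb x).2]
  rw [hfun, hmin, hmin2]

lemma hfun_ftc
    (hEmin : ∀ v d₁ d₂, AEStronglyMeasurable v muI → (∀ x, v x ∈ Icc (0:ℝ) 1) →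
      eVariationOn v (Ioo 0 1) ≠ ⊤ → d₁ ∈ Icc (0:ℝ) 1 → d₂ ∈ Icc (0:ℝ) 1 →
      EE lam f w c₁ c₂ ≤ EE lam f v d₁ d₂)
    (hlam : 0 < lam) (hf : AEMeasurable f muI)
    (hf01 : ∀ x ∈ Ioo (0:ℝ) 1, f x ∈ Icc (0:ℝ) 1)
    (hwm : AEStronglyMeasurable w muI) (hwb : ∀ x, w x ∈ Icc (0:ℝ) 1)
    (hVw : eVariationOn w (Ioo 0 1) ≠ ⊤)
    (hc₁ : c₁ ∈ Icc (0:ℝ) 1) (hc₂ : c₂ ∈ Icc (0:ℝ) 1) :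
    ∫ s in Ioo (0:ℝ) 1, deriv (hfun lam f w c₁ c₂) s = hfun lam f w c₁ c₂ 1 := by
  have := ftc_antitone_lip (h := hfun lam f w c₁ c₂) (Λ := lam) (le_of_lt hlam)
    (hfun_antitone hEmin hlam hf hf01 hwm hwb hVw hc₁ hc₂)
    (hfun_lip hf hf01 hwm hwb hVw hc₁ hc₂ (le_of_lt hlam))
    (fun t ht => hfun_const t ht)
  rw [this, hfun_zero hwb]
  ring

end core3

section core4
variable {lam : ℝ} {f w : ℝ → ℝ} {c₁ c₂ : ℝ}

lemma sum_abs_le_varR {v : ℝ → ℝ} (hfin : eVariationOn v (Ioo (0:ℝ) 1) ≠ ⊤) {p : ℕ → ℝ}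
    (hp : Monotone p) (hps : ∀ i, p i ∈ Ioo (0:ℝ) 1) (k : ℕ) :
    ∑ i ∈ Finset.range k, |v (p (i+1)) - v (p i)| ≤ (eVariationOn v (Ioo (0:ℝ) 1)).toReal := by
  have h := eVariationOn.sum_le (f := v) (n := k) hp hps
  have heq : (∑ i ∈ Finset.range k, edist (v (p (i+1))) (v (p i))).toReal
      = ∑ i ∈ Finset.range k, |v (p (i+1)) - v (p i)| := by
    rw [ENNReal.toReal_sum (fun i _ => edist_ne_top _ _)]
    refine Finset.sum_congr rfl fun i _ => ?_
    rw [edist_dist, ENNReal.toReal_ofReal dist_nonneg, Real.dist_eq]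
  rw [← heq]
  exact ENNReal.toReal_mono hfin h

lemma chi_aemeas (hwm : AEStronglyMeasurable w muI) (s : ℝ) :
    AEMeasurable (fun x => if s < w x then (1:ℝ) else 0) muI := by
  obtain ⟨w', hw'meas, hww'⟩ := hwm.aemeasurable
  refine ⟨fun x => if s < w' x then (1:ℝ) else 0, ?_, ?_⟩
  · exact Measurable.ite (measurableSet_lt measurable_const hw'meas)
      measurable_const measurable_const
  · filter_upwards [hww'] with x hx
    rw [hx]

lemma slice_fin (hwb : ∀ x, w x ∈ Icc (0:ℝ) 1) (hVw : eVariationOn w (Ioo 0 1) ≠ ⊤)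
    {s t : ℝ} (hst : s ≤ t) :
    eVariationOn (fun x => min (w x) t - min (w x) s) (Ioo (0:ℝ) 1) ≠ ⊤ := by
  intro hcon
  have hslice := evar_slice (w := w) hwb hst
  rw [hcon, add_top] at hslice
  exact evar_min_fin hVw t hslice

lemma varR_slice (hwb : ∀ x, w x ∈ Icc (0:ℝ) 1) (hVw : eVariationOn w (Ioo 0 1) ≠ ⊤)
    {s t : ℝ} (hst : s ≤ t) :
    (eVariationOn (fun x => min (w x) t) (Ioo (0:ℝ) 1)).toReal
      = (eVariationOn (fun x => min (w x) s) (Ioo (0:ℝ) 1)).toReal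
        + (eVariationOn (fun x => min (w x) t - min (w x) s) (Ioo (0:ℝ) 1)).toReal := by
  rw [← ENNReal.toReal_add (evar_min_fin hVw s) (slice_fin hwb hVw hst)]
  rw [evar_slice (w := w) hwb hst]

lemma intG_min (hf : AEMeasurable f muI) (hf01 : ∀ x ∈ Ioo (0:ℝ) 1, f x ∈ Icc (0:ℝ) 1)
    (hc₁ : c₁ ∈ Icc (0:ℝ) 1) (hc₂ : c₂ ∈ Icc (0:ℝ) 1)
    (hwm : AEStronglyMeasurable w muI) (hwb : ∀ x, w x ∈ Icc (0:ℝ) 1)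
    {t : ℝ} (h0 : 0 ≤ t) :
    Integrable (fun x => min (w x) t * Gg f c₁ c₂ x) muI := by
  refine int_vG hf hf01 hc₁ hc₂ (hwm.aemeasurable.min aemeasurable_const) fun x => ?_
  rw [abs_le]
  constructor
  · rcases le_total (w x) t with h|h
    · rw [min_eq_left h]; linarith [(hwb x).1]
    · rw [min_eq_right h]; linarith
  · rcases le_total (w x) t with h|h
    · rw [min_eq_left h]; exact (hwb x).2
    · rw [min_eq_right h]; exact h.trans (hwb x).2

lemma int_diffG (hf : AEMeasurable f muI) (hf01 : ∀ x ∈ Ioo (0:ℝ) 1, f x ∈ Icc (0:ℝ) 1)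
    (hc₁ : c₁ ∈ Icc (0:ℝ) 1) (hc₂ : c₂ ∈ Icc (0:ℝ) 1)
    (hwm : AEStronglyMeasurable w muI) (hwb : ∀ x, w x ∈ Icc (0:ℝ) 1)
    {s t : ℝ} (h0 : 0 ≤ s) (hst : s ≤ t) :
    ∫ x, (min (w x) t - min (w x) s) * Gg f c₁ c₂ x ∂muI
      = (∫ x, min (w x) t * Gg f c₁ c₂ x ∂muI) - ∫ x, min (w x) s * Gg f c₁ c₂ x ∂muI := by
  have heq : (fun x => (min (w x) t - min (w x) s) * Gg f c₁ c₂ x)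
      = fun x => min (w x) t * Gg f c₁ c₂ x - min (w x) s * Gg f c₁ c₂ x := by
    funext x; ring
  rw [heq, integral_sub (intG_min hf hf01 hc₁ hc₂ hwm hwb (h0.trans hst))
    (intG_min hf hf01 hc₁ hc₂ hwm hwb h0)]

/-- at a point of differentiability the indicator of the superlevel set has controlled energy -/
lemma deriv_point (hlam : 0 < lam) (hf : AEMeasurable f muI)
    (hf01 : ∀ x ∈ Ioo (0:ℝ) 1, f x ∈ Icc (0:ℝ) 1)
    (hwm : AEStronglyMeasurable w muI) (hwb : ∀ x, w x ∈ Icc (0:ℝ) 1)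
    (hVw : eVariationOn w (Ioo 0 1) ≠ ⊤)
    (hc₁ : c₁ ∈ Icc (0:ℝ) 1) (hc₂ : c₂ ∈ Icc (0:ℝ) 1)
    {s : ℝ} (hs : s ∈ Ioo (0:ℝ) 1) (hd : DifferentiableAt ℝ (hfun lam f w c₁ c₂) s) :
    eVariationOn (fun x => if s < w x then (1:ℝ) else 0) (Ioo (0:ℝ) 1) ≠ ⊤ ∧
    (eVariationOn (fun x => if s < w x then (1:ℝ) else 0) (Ioo (0:ℝ) 1)).toReal
      + lam * (∫ x, (if s < w x then (1:ℝ) else 0) * Gg f c₁ c₂ x ∂muI)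
      ≤ deriv (hfun lam f w c₁ c₂) s := by
  set G := Gg f c₁ c₂ with hG
  set χ : ℝ → ℝ := fun x => if s < w x then (1:ℝ) else 0 with hχ
  set m : ℕ → ℝ → ℝ := fun n x => min (w x) (s + 1/n) - min (w x) s with hmdef
  have hs0 : 0 ≤ s := le_of_lt hs.1
  have hs1 : s < 1 := hs.2
  -- the eventual identity
  have hNlar : ∀ᶠ n : ℕ in Filter.atTop, 1 ≤ n ∧ s + 1/(n:ℝ) ≤ 1 := by
    have h2 : Filter.Tendsto (fun n : ℕ => 1/(n:ℝ)) Filter.atTop (nhds 0) := by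
      exact tendsto_one_div_atTop_nhds_zero_nat
    have h3 := h2.eventually_le_const (show (0:ℝ) < 1 - s by linarith)
    filter_upwards [Filter.eventually_ge_atTop 1, h3] with n h4 h5
    exact ⟨h4, by linarith⟩
  have hcomp : ∀ n : ℕ, 1 ≤ n → s + 1/(n:ℝ) ≤ 1 →
      (n:ℝ) * (hfun lam f w c₁ c₂ (s + 1/n) - hfun lam f w c₁ c₂ s)
        = (n:ℝ) * (eVariationOn (m n) (Ioo (0:ℝ) 1)).toReal
          + lam * ∫ x, ((n:ℝ) * m n x) * G x ∂muI := by
    intro n h1n hsn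
    have hn' : (0:ℝ) < n := by exact_mod_cast h1n
    have h1nn : (0:ℝ) ≤ 1/n := by positivity
    have hst : s ≤ s + 1/n := by linarith
    have hcl1 : cl (s + 1/n) = s + 1/n := cl_eq (by linarith) hsn
    have hcl2 : cl s = s := cl_eq hs0 (le_of_lt hs1)
    have hint : ∫ x, ((n:ℝ) * m n x) * G x ∂muI = (n:ℝ) * ∫ x, m n x * G x ∂muI := by
      rw [← MeasureTheory.integral_const_mul]
      congr 1
      funext x
      ring
    rw [hint]
    unfold hfun
    rw [hcl1, hcl2, varR_slice hwb hVw hst, int_diffG hf hf01 hc₁ hc₂ hwm hwb hs0 hst]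
    rw [hmdef]
    ring
  -- convergence of the fidelity part
  have hfid_tend : Filter.Tendsto (fun n : ℕ => ∫ x, ((n:ℝ) * m n x) * G x ∂muI)
      Filter.atTop (nhds (∫ x, χ x * G x ∂muI)) := by
    refine MeasureTheory.tendsto_integral_of_dominated_convergence (fun _ => 1) ?_ ?_ ?_ ?_
    · intro n
      apply AEMeasurable.aestronglyMeasurable
      exact ((aemeasurable_const.mul ((hwm.aemeasurable.min aemeasurable_const).sub
        (hwm.aemeasurable.min aemeasurable_const))).mul (Gg_meas hf))
    · exact integrable_const 1
    · intro n
      filter_upwards [Gg_bd hf01 hc₁ hc₂] with x hGx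
      rcases Nat.eq_zero_or_pos n with rfl | hn
      · simp [hmdef]
      · have hn' : (0:ℝ) < n := by exact_mod_cast hn
        have h1nn : (0:ℝ) ≤ 1/n := by positivity
        have hmb := m_bounds (by linarith : s ≤ s + 1/n) (w x)
        rw [Real.norm_eq_abs, abs_mul, abs_mul]
        have h1 : |(n:ℝ)| * |m n x| ≤ 1 := by
          rw [abs_of_nonneg (le_of_lt hn'), abs_of_nonneg (hmb.1)]
          calc (n:ℝ) * (min (w x) (s + 1/n) - min (w x) s) ≤ (n:ℝ) * (1/n) := by
                refine mul_le_mul_of_nonneg_left ?_ (le_of_lt hn')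
                have := hmb.2
                simpa using this
            _ = 1 := by field_simp
        calc |(n:ℝ)| * |m n x| * |G x| ≤ 1 * 1 :=
              mul_le_mul h1 hGx (abs_nonneg _) zero_le_one
          _ = 1 := by norm_num
    · refine Filter.Eventually.of_forall fun x => ?_
      have hconv : Filter.Tendsto (fun n : ℕ => (n:ℝ) * m n x) Filter.atTop (nhds (χ x)) := by
        rcases lt_or_ge s (w x) with hx | hx
        · have hev : ∀ᶠ n : ℕ in Filter.atTop, (n:ℝ) * m n x = 1 := by
            have h2 : Filter.Tendsto (fun n : ℕ => 1/(n:ℝ)) Filter.atTop (nhds 0) := by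
              exact tendsto_one_div_atTop_nhds_zero_nat
            have h3 := h2.eventually_le_const (show (0:ℝ) < w x - s by linarith)
            filter_upwards [Filter.eventually_ge_atTop 1, h3] with n h4 h5
            have hn' : (0:ℝ) < n := by exact_mod_cast h4
            have : min (w x) (s + 1/n) = s + 1/n := min_eq_right (by linarith)
            have h6 : min (w x) s = s := min_eq_right (by linarith)
            rw [hmdef]
            simp only [this, h6]
            field_simp
            ring
          rw [hχ]
          simp only [if_pos hx]
          exact Filter.Tendsto.congr' (Filter.EventuallyEq.symm hev) tendsto_const_nhds
        · have hev : ∀ n : ℕ, (n:ℝ) * m n x = 0 := by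
            intro n
            rcases Nat.eq_zero_or_pos n with rfl | hn
            · simp
            · have hn' : (0:ℝ) < n := by exact_mod_cast hn
              have h1nn : (0:ℝ) ≤ 1/n := by positivity
              have h5 : min (w x) (s + 1/n) = w x := min_eq_left (by linarith)
              have h6 : min (w x) s = w x := min_eq_left hx
              rw [hmdef]
              simp only [h5, h6]
              ring
          rw [hχ]
          simp only [if_neg (not_lt.mpr hx)]
          simp only [hev]
          exact tendsto_const_nhds
      exact hconv.mul tendsto_const_nhds
  -- convergence of n * VarR (m n)
  have hslope := slope_tendsto hd
  set W : ℝ := deriv (hfun lam f w c₁ c₂) s - lam * ∫ x, χ x * G x ∂muI with hW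
  have hVar_tend : Filter.Tendsto (fun n : ℕ => (n:ℝ) * (eVariationOn (m n) (Ioo (0:ℝ) 1)).toReal)
      Filter.atTop (nhds W) := by
    have h1 := hslope.sub (hfid_tend.const_mul lam)
    refine Filter.Tendsto.congr' ?_ h1
    filter_upwards [hNlar] with n hn
    have := hcomp n hn.1 hn.2
    linarith [this]
  have hW0 : 0 ≤ W := by
    refine ge_of_tendsto hVar_tend ?_
    filter_upwards with n
    positivity
  -- variation bound for χ
  have hchi_bound : eVariationOn χ (Ioo (0:ℝ) 1) ≤ ENNReal.ofReal W := by
    rw [eVariationOn]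
    refine iSup_le ?_
    rintro ⟨k, ⟨p, hp, hps⟩⟩
    have hsum_eq : (∑ i ∈ Finset.range k, edist (χ (p (i+1))) (χ (p i)))
        = ENNReal.ofReal (∑ i ∈ Finset.range k, |χ (p (i+1)) - χ (p i)|) := by
      rw [ENNReal.ofReal_sum_of_nonneg (fun i _ => abs_nonneg _)]
      refine Finset.sum_congr rfl fun i _ => ?_
      rw [edist_dist, Real.dist_eq]
    rw [hsum_eq]
    refine ENNReal.ofReal_le_ofReal ?_
    -- the real partition sums converge
    have hptconv : ∀ y : ℝ, Filter.Tendsto (fun n : ℕ => (n:ℝ) * m n y) Filter.atTop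
        (nhds (χ y)) := by
      intro y
      rcases lt_or_ge s (w y) with hx | hx
      · have hev : ∀ᶠ n : ℕ in Filter.atTop, (n:ℝ) * m n y = 1 := by
          have h2 : Filter.Tendsto (fun n : ℕ => 1/(n:ℝ)) Filter.atTop (nhds 0) := by
            exact tendsto_one_div_atTop_nhds_zero_nat
          have h3 := h2.eventually_le_const (show (0:ℝ) < w y - s by linarith)
          filter_upwards [Filter.eventually_ge_atTop 1, h3] with n h4 h5
          have hn' : (0:ℝ) < n := by exact_mod_cast h4
          have h7 : min (w y) (s + 1/n) = s + 1/n := min_eq_right (by linarith)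
          have h6 : min (w y) s = s := min_eq_right (by linarith)
          rw [hmdef]
          simp only [h7, h6]
          field_simp
          ring
        rw [hχ]
        simp only [if_pos hx]
        exact Filter.Tendsto.congr' (Filter.EventuallyEq.symm hev) tendsto_const_nhds
      · have hev : ∀ n : ℕ, (n:ℝ) * m n y = 0 := by
          intro n
          rcases Nat.eq_zero_or_pos n with rfl | hn
          · simp
          · have hn' : (0:ℝ) < n := by exact_mod_cast hn
            have h1nn : (0:ℝ) ≤ 1/n := by positivity
            have h5 : min (w y) (s + 1/n) = w y := min_eq_left (by linarith)
            have h6 : min (w y) s = w y := min_eq_left hx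
            rw [hmdef]
            simp only [h5, h6]
            ring
        rw [hχ]
        simp only [if_neg (not_lt.mpr hx)]
        simp only [hev]
        exact tendsto_const_nhds
    have hSconv : Filter.Tendsto
        (fun n : ℕ => ∑ i ∈ Finset.range k, |(n:ℝ) * m n (p (i+1)) - (n:ℝ) * m n (p i)|)
        Filter.atTop (nhds (∑ i ∈ Finset.range k, |χ (p (i+1)) - χ (p i)|)) := by
      refine tendsto_finset_sum _ fun i _ => ?_
      exact ((hptconv (p (i+1))).sub (hptconv (p i))).abs
    refine le_of_tendsto_of_tendsto' hSconv hVar_tend fun n => ?_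
    -- partition sum bound
    rcases Nat.eq_zero_or_pos n with rfl | hn
    · simp
    have hn' : (0:ℝ) < n := by exact_mod_cast hn
    have h1nn : (0:ℝ) ≤ 1/n := by positivity
    have hfin : eVariationOn (m n) (Ioo (0:ℝ) 1) ≠ ⊤ := by
      rw [hmdef]
      exact slice_fin hwb hVw (by linarith)
    calc ∑ i ∈ Finset.range k, |(n:ℝ) * m n (p (i+1)) - (n:ℝ) * m n (p i)|
        = (n:ℝ) * ∑ i ∈ Finset.range k, |m n (p (i+1)) - m n (p i)| := by
          rw [Finset.mul_sum]
          refine Finset.sum_congr rfl fun i _ => ?_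
          rw [← mul_sub, abs_mul, abs_of_nonneg (le_of_lt hn')]
      _ ≤ (n:ℝ) * (eVariationOn (m n) (Ioo (0:ℝ) 1)).toReal := by
          exact mul_le_mul_of_nonneg_left (sum_abs_le_varR hfin hp hps k) (le_of_lt hn')
  constructor
  · exact ne_top_of_le_ne_top ENNReal.ofReal_ne_top hchi_bound
  · have h1 : (eVariationOn χ (Ioo (0:ℝ) 1)).toReal ≤ W := by
      have := ENNReal.toReal_mono ENNReal.ofReal_ne_top hchi_bound
      rwa [ENNReal.toReal_ofReal hW0] at this
    show (eVariationOn χ (Ioo (0:ℝ) 1)).toReal + lam * ∫ x, χ x * G x ∂muI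
        ≤ deriv (hfun lam f w c₁ c₂) s
    linarith [h1, hW]

end core4

section core5
variable {lam : ℝ} {f w : ℝ → ℝ} {c₁ c₂ : ℝ}

/-- derivative bound for the Lipschitz antitone `hfun` -/
lemma deriv_hfun_bd
    (hEmin : ∀ v d₁ d₂, AEStronglyMeasurable v muI → (∀ x, v x ∈ Icc (0:ℝ) 1) →
      eVariationOn v (Ioo 0 1) ≠ ⊤ → d₁ ∈ Icc (0:ℝ) 1 → d₂ ∈ Icc (0:ℝ) 1 →
      EE lam f w c₁ c₂ ≤ EE lam f v d₁ d₂)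
    (hlam : 0 < lam) (hf : AEMeasurable f muI)
    (hf01 : ∀ x ∈ Ioo (0:ℝ) 1, f x ∈ Icc (0:ℝ) 1)
    (hwm : AEStronglyMeasurable w muI) (hwb : ∀ x, w x ∈ Icc (0:ℝ) 1)
    (hVw : eVariationOn w (Ioo 0 1) ≠ ⊤)
    (hc₁ : c₁ ∈ Icc (0:ℝ) 1) (hc₂ : c₂ ∈ Icc (0:ℝ) 1) (s : ℝ) :
    |deriv (hfun lam f w c₁ c₂) s| ≤ lam := by
  by_cases hd : DifferentiableAt ℝ (hfun lam f w c₁ c₂) s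
  · have hslope := slope_tendsto hd
    rw [abs_le]
    constructor
    · refine ge_of_tendsto hslope ?_
      filter_upwards [Filter.eventually_ge_atTop 1] with n hn
      have hn' : (0:ℝ) < n := by exact_mod_cast hn
      have hlips := hfun_lip (w := w) hf hf01 hwm hwb hVw hc₁ hc₂ (le_of_lt hlam) s (s + 1/n)
        (le_add_of_nonneg_right (by positivity))
      have h2 : -(lam * (1/n)) ≤ hfun lam f w c₁ c₂ (s + 1/n) - hfun lam f w c₁ c₂ s := by
        have : lam * (s + 1/n - s) = lam * (1/n) := by ring_nf
        linarith [hlips, this]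
      calc -lam = (n:ℝ) * (-(lam * (1/n))) := by field_simp
        _ ≤ (n:ℝ) * (hfun lam f w c₁ c₂ (s + 1/n) - hfun lam f w c₁ c₂ s) :=
            mul_le_mul_of_nonneg_left h2 (le_of_lt hn')
    · refine le_of_tendsto hslope ?_
      filter_upwards [Filter.eventually_ge_atTop 1] with n hn
      have hn' : (0:ℝ) < n := by exact_mod_cast hn
      have hanti := hfun_antitone (w := w) hEmin hlam hf hf01 hwm hwb hVw hc₁ hc₂
        (a := s) (b := s + 1/n) (le_add_of_nonneg_right (by positivity : (0:ℝ) ≤ 1/n))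
      have : (n:ℝ) * (hfun lam f w c₁ c₂ (s + 1/n) - hfun lam f w c₁ c₂ s) ≤ 0 := by
        apply mul_nonpos_of_nonneg_of_nonpos (le_of_lt hn')
        linarith [hanti]
      linarith [this, le_of_lt hlam]
  · rw [deriv_zero_of_not_differentiableAt hd]
    rw [abs_zero]
    exact le_of_lt hlam

/-- a.e. levels are "good": thresholding at the level does not increase the energy -/
lemma good_ae
    (hEmin : ∀ v d₁ d₂, AEStronglyMeasurable v muI → (∀ x, v x ∈ Icc (0:ℝ) 1) →
      eVariationOn v (Ioo 0 1) ≠ ⊤ → d₁ ∈ Icc (0:ℝ) 1 → d₂ ∈ Icc (0:ℝ) 1 →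
      EE lam f w c₁ c₂ ≤ EE lam f v d₁ d₂)
    (hlam : 0 < lam) (hf : AEMeasurable f muI)
    (hf01 : ∀ x ∈ Ioo (0:ℝ) 1, f x ∈ Icc (0:ℝ) 1)
    (hwm : AEStronglyMeasurable w muI) (hwb : ∀ x, w x ∈ Icc (0:ℝ) 1)
    (hVw : eVariationOn w (Ioo 0 1) ≠ ⊤)
    (hc₁ : c₁ ∈ Icc (0:ℝ) 1) (hc₂ : c₂ ∈ Icc (0:ℝ) 1) :
    ∀ᵐ s ∂muI, eVariationOn (fun x => if s < w x then (1:ℝ) else 0) (Ioo (0:ℝ) 1) ≠ ⊤ ∧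
      EE lam f (fun x => if s < w x then (1:ℝ) else 0) c₁ c₂ ≤ EE lam f w c₁ c₂ := by
  set h := hfun lam f w c₁ c₂ with hh
  -- Lipschitz continuity of h
  have hanti : Antitone h := hfun_antitone hEmin hlam hf hf01 hwm hwb hVw hc₁ hc₂
  have hlips := hfun_lip (w := w) hf hf01 hwm hwb hVw hc₁ hc₂ (le_of_lt hlam)
  have hlipW : LipschitzWith (Real.toNNReal lam) h := by
    refine LipschitzWith.of_dist_le_mul fun x y => ?_
    rcases le_total x y with hxy | hxy
    · rw [Real.dist_eq, Real.dist_eq, abs_of_nonneg (by linarith [hanti hxy]),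
        abs_of_nonpos (by linarith), Real.coe_toNNReal _ (le_of_lt hlam)]
      have := hlips x y hxy
      linarith
    · rw [Real.dist_eq, Real.dist_eq, abs_of_nonpos (by linarith [hanti hxy]),
        abs_of_nonneg (by linarith), Real.coe_toNNReal _ (le_of_lt hlam)]
      have := hlips y x hxy
      linarith
  have hdiff : ∀ᵐ s ∂muI, DifferentiableAt ℝ h s :=
    ae_restrict_of_ae hlipW.ae_differentiableAt_real
  -- pointwise lower bound on the derivative at good points
  have hptwise : ∀ᵐ s ∂muI, h 1 ≤ deriv h s := by
    filter_upwards [hdiff, (ae_restrict_mem measurableSet_Ioo : ∀ᵐ s ∂muI, s ∈ Ioo (0:ℝ) 1)]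
      with s hd hsI
    obtain ⟨hfin, hbd⟩ := deriv_point (w := w) hlam hf hf01 hwm hwb hVw hc₁ hc₂ hsI hd
    have hchi_m : AEMeasurable (fun x => if s < w x then (1:ℝ) else 0) muI := chi_aemeas hwm s
    have hchi_b : ∀ x, (fun x => if s < w x then (1:ℝ) else 0) x ∈ Icc (0:ℝ) 1 := by
      intro x
      by_cases hx : s < w x <;> simp [hx]
    have hEmin_chi := hEmin _ c₁ c₂ hchi_m.aestronglyMeasurable hchi_b hfin hc₁ hc₂
    -- expand both energies using FidR_split
    have hsplit_chi := FidR_split (v := fun x => if s < w x then (1:ℝ) else 0)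
      hf hf01 hc₁ hc₂ hchi_m (fun x => by by_cases hx : s < w x <;> simp [hx])
    have hsplit_w := FidR_split (v := w) hf hf01 hc₁ hc₂ hwm.aemeasurable
      (fun x => abs_le.mpr ⟨by linarith [(hwb x).1], (hwb x).2⟩)
    have hEw : EE lam f w c₁ c₂ = h 1 + lam * KK f c₂ := by
      rw [EE, hsplit_w, hh, hfun_one hwb]
      ring
    have hEchi : EE lam f (fun x => if s < w x then (1:ℝ) else 0) c₁ c₂
        ≤ deriv h s + lam * KK f c₂ := by
      rw [EE, hsplit_chi]
      have := hbd
      linarith [hbd]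
    linarith [hEmin_chi, hEchi, hEw]
  -- the integral identity
  have hftc : ∫ s in Ioo (0:ℝ) 1, deriv h s = h 1 :=
    hfun_ftc hEmin hlam hf hf01 hwm hwb hVw hc₁ hc₂
  have hint_deriv : Integrable (fun s => deriv h s) muI := by
    refine integrable_of_bd lam (Measurable.aestronglyMeasurable (measurable_deriv h)) ?_
    refine Filter.Eventually.of_forall fun s => ?_
    exact deriv_hfun_bd hEmin hlam hf hf01 hwm hwb hVw hc₁ hc₂ s
  -- deriv h = h 1 a.e.
  have hae_eq : ∀ᵐ s ∂muI, deriv h s = h 1 := by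
    have hint2 : Integrable (fun s => deriv h s - h 1) muI := hint_deriv.sub (integrable_const _)
    have hzero : ∫ s, (deriv h s - h 1) ∂muI = 0 := by
      rw [integral_sub hint_deriv (integrable_const _), integral_const, measureReal_def, muI_univ]
      have : ∫ s, deriv h s ∂muI = h 1 := by
        rw [muI]
        exact hftc
      rw [this]
      simp
    have hnn : 0 ≤ᵐ[muI] fun s => deriv h s - h 1 := by
      filter_upwards [hptwise] with s hs
      simp only [Pi.zero_apply]
      linarith
    have := (MeasureTheory.integral_eq_zero_iff_of_nonneg_ae hnn hint2).mp hzero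
    filter_upwards [this] with s hs
    have : deriv h s - h 1 = 0 := hs
    linarith
  -- combine
  filter_upwards [hdiff, hae_eq,
    (ae_restrict_mem measurableSet_Ioo : ∀ᵐ s ∂muI, s ∈ Ioo (0:ℝ) 1)] with s hd heq hsI
  obtain ⟨hfin, hbd⟩ := deriv_point (w := w) hlam hf hf01 hwm hwb hVw hc₁ hc₂ hsI hd
  refine ⟨hfin, ?_⟩
  have hchi_m : AEMeasurable (fun x => if s < w x then (1:ℝ) else 0) muI := chi_aemeas hwm s
  have hsplit_chi := FidR_split (v := fun x => if s < w x then (1:ℝ) else 0)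
    hf hf01 hc₁ hc₂ hchi_m (fun x => by by_cases hx : s < w x <;> simp [hx])
  have hsplit_w := FidR_split (v := w) hf hf01 hc₁ hc₂ hwm.aemeasurable
    (fun x => abs_le.mpr ⟨by linarith [(hwb x).1], (hwb x).2⟩)
  have hEw : EE lam f w c₁ c₂ = h 1 + lam * KK f c₂ := by
    rw [EE, hsplit_w, hh, hfun_one hwb]
    ring
  rw [EE, hsplit_chi, hEw]
  have := hbd
  rw [heq] at this
  linarith [this]

end core5

section core6
variable {lam : ℝ} {f w : ℝ → ℝ} {c₁ c₂ : ℝ}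

/-- optimality of the constant for a weighted quadratic implies it is the weighted mean -/
lemma quad_opt (hf : AEMeasurable f muI) (hf01 : ∀ x ∈ Ioo (0:ℝ) 1, f x ∈ Icc (0:ℝ) 1)
    {g : ℝ → ℝ} (hgm : AEMeasurable g muI) (hgb : ∀ x, g x ∈ Icc (0:ℝ) 1)
    {c : ℝ} (hc : c ∈ Icc (0:ℝ) 1)
    (hopt : ∀ d, d ∈ Icc (0:ℝ) 1 →
      ∫ x, g x * (c - f x)^2 ∂muI ≤ ∫ x, g x * (d - f x)^2 ∂muI) :
    ∫ x, g x * f x ∂muI = c * ∫ x, g x ∂muI := by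
  set P := ∫ x, g x ∂muI with hP
  set M := ∫ x, g x * f x ∂muI with hM
  have intP : Integrable g muI :=
    integrable_of_bd 1 hgm.aestronglyMeasurable
      (Filter.Eventually.of_forall fun x => abs_le.mpr ⟨by linarith [(hgb x).1], (hgb x).2⟩)
  have intM : Integrable (fun x => g x * f x) muI := by
    refine integrable_of_bd 1 (hgm.mul hf).aestronglyMeasurable ?_
    filter_upwards [f_ae_mem hf01] with x hx
    rw [abs_mul, abs_of_nonneg (hgb x).1, abs_of_nonneg hx.1]
    calc g x * f x ≤ 1 * 1 := mul_le_mul (hgb x).2 hx.2 hx.1 zero_le_one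
      _ = 1 := by norm_num
  have intQ : Integrable (fun x => g x * f x ^ 2) muI := by
    refine integrable_of_bd 1 (hgm.mul (hf.pow aemeasurable_const)).aestronglyMeasurable ?_
    filter_upwards [f_ae_mem hf01] with x hx
    rw [abs_mul, abs_of_nonneg (hgb x).1, abs_of_nonneg (sq_nonneg _)]
    calc g x * f x ^ 2 ≤ 1 * 1 := by nlinarith [(hgb x).1, (hgb x).2, hx.1, hx.2]
      _ = 1 := by norm_num
  have hexp : ∀ d : ℝ, ∫ x, g x * (d - f x)^2 ∂muI
      = d^2 * P - 2*d*M + ∫ x, g x * f x ^ 2 ∂muI := by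
    intro d
    have heq : (fun x => g x * (d - f x)^2)
        = fun x => (d^2 * g x - 2*d*(g x * f x)) + g x * f x ^ 2 := by
      funext x; ring
    have intA1 : Integrable (fun x => d^2 * g x) muI := intP.const_mul _
    have intA2 : Integrable (fun x => 2*d*(g x * f x)) muI := intM.const_mul _
    have intA : Integrable (fun x => d^2 * g x - 2*d*(g x * f x)) muI := intA1.sub intA2
    rw [heq, integral_add intA intQ, integral_sub intA1 intA2,
      MeasureTheory.integral_const_mul, MeasureTheory.integral_const_mul]
  have hM0 : 0 ≤ M := by
    rw [hM]
    refine integral_nonneg_of_ae ?_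
    filter_upwards [f_ae_mem hf01] with x hx
    exact mul_nonneg (hgb x).1 hx.1
  have hMP : M ≤ P := by
    rw [hM, hP]
    refine integral_mono_ae intM intP ?_
    filter_upwards [f_ae_mem hf01] with x hx
    calc g x * f x ≤ g x * 1 := mul_le_mul_of_nonneg_left hx.2 (hgb x).1
      _ = g x := by ring
  have hP0 : 0 ≤ P := hM0.trans hMP
  rcases eq_or_lt_of_le hP0 with hPz | hPpos
  · have : M = 0 := le_antisymm (by linarith) hM0
    rw [this, ← hPz]
    ring
  · set d := M / P with hd
    have hd0 : 0 ≤ d := div_nonneg hM0 (le_of_lt hPpos)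
    have hd1 : d ≤ 1 := by
      rw [hd, div_le_one hPpos]
      exact hMP
    have hMd : M = d * P := by
      rw [hd]
      field_simp
    have h1 := hopt d ⟨hd0, hd1⟩
    rw [hexp c, hexp d, hMd] at h1
    have h2 : P * (c - d)^2 ≤ 0 := by nlinarith [h1]
    have h3 : (c - d)^2 ≤ 0 := by nlinarith [sq_nonneg (c - d), hPpos]
    have h4 : c - d = 0 := by
      have := le_antisymm h3 (sq_nonneg (c - d))
      exact pow_eq_zero_iff (by norm_num) |>.mp this
    have : c = d := by linarith
    rw [hMd, this]

lemma mean_cond (hlam : 0 < lam) (hf : AEMeasurable f muI)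
    (hf01 : ∀ x ∈ Ioo (0:ℝ) 1, f x ∈ Icc (0:ℝ) 1)
    (hwm : AEStronglyMeasurable w muI)
    (hc₁ : c₁ ∈ Icc (0:ℝ) 1) (hc₂ : c₂ ∈ Icc (0:ℝ) 1)
    (hEmin : ∀ v d₁ d₂, AEStronglyMeasurable v muI → (∀ x, v x ∈ Icc (0:ℝ) 1) →
      eVariationOn v (Ioo 0 1) ≠ ⊤ → d₁ ∈ Icc (0:ℝ) 1 → d₂ ∈ Icc (0:ℝ) 1 →
      EE lam f w c₁ c₂ ≤ EE lam f v d₁ d₂)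
    {t : ℝ} (hfin : eVariationOn (fun x => if t < w x then (1:ℝ) else 0) (Ioo (0:ℝ) 1) ≠ ⊤)
    (hgood : EE lam f (fun x => if t < w x then (1:ℝ) else 0) c₁ c₂ ≤ EE lam f w c₁ c₂) :
    (∫ x, (if t < w x then (1:ℝ) else 0) * f x ∂muI
        = c₁ * ∫ x, (if t < w x then (1:ℝ) else 0) ∂muI)
      ∧ (∫ x, (1 - if t < w x then (1:ℝ) else 0) * f x ∂muI
        = c₂ * ∫ x, (1 - if t < w x then (1:ℝ) else 0) ∂muI) := by
  set χ : ℝ → ℝ := fun x => if t < w x then (1:ℝ) else 0 with hχ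
  have hχm : AEMeasurable χ muI := chi_aemeas hwm t
  have hχb : ∀ x, χ x ∈ Icc (0:ℝ) 1 := fun x => by
    by_cases hx : t < w x <;> simp [hχ, hx]
  have hχ'm : AEMeasurable (fun x => 1 - χ x) muI := aemeasurable_const.sub hχm
  have hχ'b : ∀ x, (1 - χ x) ∈ Icc (0:ℝ) 1 := fun x => by
    obtain ⟨h1, h2⟩ := hχb x
    constructor <;> [linarith; linarith]
  -- fidelity optimality
  have hFopt : ∀ d₁ d₂, d₁ ∈ Icc (0:ℝ) 1 → d₂ ∈ Icc (0:ℝ) 1 →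
      FidR f χ c₁ c₂ ≤ FidR f χ d₁ d₂ := by
    intro d₁ d₂ hd₁ hd₂
    have h1 := hEmin χ d₁ d₂ hχm.aestronglyMeasurable hχb hfin hd₁ hd₂
    have h2 : EE lam f χ c₁ c₂ ≤ EE lam f χ d₁ d₂ := le_trans hgood h1
    rw [EE, EE] at h2
    exact le_of_mul_le_mul_left (by linarith) hlam
  -- decompose the fidelity
  have hsplit : ∀ d₁ d₂ : ℝ, d₁ ∈ Icc (0:ℝ) 1 → d₂ ∈ Icc (0:ℝ) 1 → FidR f χ d₁ d₂
      = (∫ x, χ x * (d₁ - f x)^2 ∂muI) + ∫ x, (1 - χ x) * (d₂ - f x)^2 ∂muI := by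
    intro d₁ d₂ hd₁ hd₂
    rw [FidR]
    refine integral_add ?_ ?_
    · refine integrable_of_bd 1 (hχm.mul ((aemeasurable_const.sub hf).pow
        aemeasurable_const)).aestronglyMeasurable ?_
      filter_upwards [f_ae_mem hf01] with x hx
      rw [abs_mul, abs_of_nonneg (hχb x).1, abs_of_nonneg (sq_nonneg _)]
      nlinarith [(hχb x).1, (hχb x).2, hx.1, hx.2, hd₁.1, hd₁.2]
    · refine integrable_of_bd 1 (hχ'm.mul ((aemeasurable_const.sub hf).pow
        aemeasurable_const)).aestronglyMeasurable ?_
      filter_upwards [f_ae_mem hf01] with x hx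
      rw [abs_mul, abs_of_nonneg (hχ'b x).1, abs_of_nonneg (sq_nonneg _)]
      nlinarith [(hχ'b x).1, (hχ'b x).2, hx.1, hx.2, hd₂.1, hd₂.2]
  constructor
  · refine quad_opt hf hf01 hχm hχb hc₁ fun d hd => ?_
    have h1 := hFopt d c₂ hd hc₂
    rw [hsplit d c₂ hd hc₂, hsplit c₁ c₂ hc₁ hc₂] at h1
    linarith
  · refine quad_opt hf hf01 hχ'm hχ'b hc₂ fun d hd => ?_
    have h1 := hFopt c₁ d hc₁ hd
    rw [hsplit c₁ d hc₁ hd, hsplit c₁ c₂ hc₁ hc₂] at h1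
    linarith

end core6

section core7
variable {lam : ℝ} {f w : ℝ → ℝ} {c₁ c₂ : ℝ}

lemma core_ne
    (hEmin : ∀ v d₁ d₂, AEStronglyMeasurable v muI → (∀ x, v x ∈ Icc (0:ℝ) 1) →
      eVariationOn v (Ioo 0 1) ≠ ⊤ → d₁ ∈ Icc (0:ℝ) 1 → d₂ ∈ Icc (0:ℝ) 1 →
      EE lam f w c₁ c₂ ≤ EE lam f v d₁ d₂)
    (hlam : 0 < lam) (hf : AEMeasurable f muI)
    (hf01 : ∀ x ∈ Ioo (0:ℝ) 1, f x ∈ Icc (0:ℝ) 1)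
    (hwm : AEStronglyMeasurable w muI) (hwb : ∀ x, w x ∈ Icc (0:ℝ) 1)
    (hVw : eVariationOn w (Ioo 0 1) ≠ ⊤)
    (hc₁ : c₁ ∈ Icc (0:ℝ) 1) (hc₂ : c₂ ∈ Icc (0:ℝ) 1) (hne : c₁ ≠ c₂) :
    ∀ᵐ x ∂muI, w x = 0 ∨ w x = 1 := by
  by_contra hcon
  rw [MeasureTheory.ae_iff] at hcon
  set S : ℕ → Set ℝ := fun n => {x | 1/((n:ℝ)+2) ≤ w x ∧ w x ≤ 1 - 1/((n:ℝ)+2)} with hS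
  have hsub : {x | ¬(w x = 0 ∨ w x = 1)} ⊆ ⋃ n : ℕ, S n := by
    intro x hx
    simp only [mem_setOf_eq] at hx
    push_neg at hx
    have h0 : 0 < w x := lt_of_le_of_ne (hwb x).1 (Ne.symm hx.1)
    have h1 : w x < 1 := lt_of_le_of_ne (hwb x).2 hx.2
    have hε : 0 < min (w x) (1 - w x) := lt_min h0 (by linarith)
    obtain ⟨k, hk⟩ := exists_nat_one_div_lt hε
    have hk1 : (0:ℝ) < (k:ℝ) + 1 := by positivity
    have hk2 : 1/((k:ℝ)+2) ≤ 1/((k:ℝ)+1) :=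
      one_div_le_one_div_of_le hk1 (by linarith)
    have hkm := lt_min_iff.mp hk
    refine mem_iUnion.2 ⟨k, ?_, ?_⟩
    · calc 1/((k:ℝ)+2) ≤ 1/((k:ℝ)+1) := hk2
        _ ≤ w x := le_of_lt hkm.1
    · have : 1/((k:ℝ)+2) < 1 - w x := lt_of_le_of_lt hk2 hkm.2
      linarith
  have hexists : ∃ n, muI (S n) ≠ 0 := by
    by_contra hall
    push_neg at hall
    exact hcon (measure_mono_null hsub (measure_iUnion_null hall))
  obtain ⟨n, hSn⟩ := hexists
  set α : ℝ := 1/((n:ℝ)+2) with hα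
  have hα0 : 0 < α := by positivity
  have hα12 : α ≤ 1/2 := by
    rw [hα]
    rw [div_le_div_iff₀ (by positivity) (by norm_num)]
    linarith [Nat.cast_nonneg (α := ℝ) n]
  -- good levels are dense
  have hGae := good_ae hEmin hlam hf hf01 hwm hwb hVw hc₁ hc₂
  have hGnull := MeasureTheory.ae_iff.mp hGae
  have hpick : ∀ a b : ℝ, 0 ≤ a → a < b → b ≤ 1 → ∃ t₀, t₀ ∈ Ioo a b ∧
      (eVariationOn (fun x => if t₀ < w x then (1:ℝ) else 0) (Ioo (0:ℝ) 1) ≠ ⊤ ∧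
        EE lam f (fun x => if t₀ < w x then (1:ℝ) else 0) c₁ c₂ ≤ EE lam f w c₁ c₂) := by
    intro a b ha hab hb1
    by_contra hno
    have hsub2 : Ioo a b ⊆ {s | ¬(eVariationOn (fun x => if s < w x then (1:ℝ) else 0)
        (Ioo (0:ℝ) 1) ≠ ⊤ ∧
        EE lam f (fun x => if s < w x then (1:ℝ) else 0) c₁ c₂ ≤ EE lam f w c₁ c₂)} := by
      intro t ht hP
      exact hno ⟨t, ht, hP⟩
    have hz := measure_mono_null hsub2 hGnull
    have hmu : muI (Ioo a b) = volume (Ioo a b) := by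
      rw [muI, Measure.restrict_apply measurableSet_Ioo]
      congr 1
      rw [inter_eq_left]
      intro x hx
      exact ⟨lt_of_le_of_lt ha hx.1, lt_of_lt_of_le hx.2 hb1⟩
    rw [hmu, Real.volume_Ioo] at hz
    have := ENNReal.ofReal_eq_zero.mp hz
    linarith
  obtain ⟨t₁, ht₁I, ht₁fin, ht₁good⟩ := hpick 0 α le_rfl hα0 (by linarith)
  obtain ⟨t₂, ht₂I, ht₂fin, ht₂good⟩ := hpick (1 - α) 1 (by linarith) (by linarith) le_rfl
  have ht₁₂ : t₁ ≤ t₂ := by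
    have := ht₁I.2
    have := ht₂I.1
    linarith
  have hm₁ := mean_cond hlam hf hf01 hwm hc₁ hc₂ hEmin ht₁fin ht₁good
  have hm₂ := mean_cond hlam hf hf01 hwm hc₁ hc₂ hEmin ht₂fin ht₂good
  set χ₁ : ℝ → ℝ := fun x => if t₁ < w x then (1:ℝ) else 0 with hχ₁
  set χ₂ : ℝ → ℝ := fun x => if t₂ < w x then (1:ℝ) else 0 with hχ₂
  -- integrabilities
  have hb₁ : ∀ x, χ₁ x ∈ Icc (0:ℝ) 1 := fun x => by by_cases h : t₁ < w x <;> simp [hχ₁, h]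
  have hb₂ : ∀ x, χ₂ x ∈ Icc (0:ℝ) 1 := fun x => by by_cases h : t₂ < w x <;> simp [hχ₂, h]
  have int₁ : Integrable χ₁ muI := integrable_of_bd 1 (chi_aemeas hwm t₁).aestronglyMeasurable
    (Filter.Eventually.of_forall fun x => abs_le.mpr ⟨by linarith [(hb₁ x).1], (hb₁ x).2⟩)
  have int₂ : Integrable χ₂ muI := integrable_of_bd 1 (chi_aemeas hwm t₂).aestronglyMeasurable
    (Filter.Eventually.of_forall fun x => abs_le.mpr ⟨by linarith [(hb₂ x).1], (hb₂ x).2⟩)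
  have intf : ∀ (g : ℝ → ℝ), AEMeasurable g muI → (∀ x, g x ∈ Icc (0:ℝ) 1) →
      Integrable (fun x => g x * f x) muI := by
    intro g hgm hgb
    refine integrable_of_bd 1 (hgm.mul hf).aestronglyMeasurable ?_
    filter_upwards [f_ae_mem hf01] with x hx
    rw [abs_mul, abs_of_nonneg (hgb x).1, abs_of_nonneg hx.1]
    calc g x * f x ≤ 1 * 1 := mul_le_mul (hgb x).2 hx.2 hx.1 zero_le_one
      _ = 1 := by norm_num
  have int₁f : Integrable (fun x => χ₁ x * f x) muI := intf χ₁ (chi_aemeas hwm t₁) hb₁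
  have int₂f : Integrable (fun x => χ₂ x * f x) muI := intf χ₂ (chi_aemeas hwm t₂) hb₂
  -- the difference integral
  have hD1 : ∫ x, (χ₁ x - χ₂ x) * f x ∂muI = c₁ * ∫ x, (χ₁ x - χ₂ x) ∂muI := by
    have e1 : (fun x => (χ₁ x - χ₂ x) * f x) = fun x => χ₁ x * f x - χ₂ x * f x := by
      funext x; ring
    rw [e1, integral_sub int₁f int₂f, integral_sub int₁ int₂, hm₁.1, hm₂.1]
    ring
  have hD2 : ∫ x, (χ₁ x - χ₂ x) * f x ∂muI = c₂ * ∫ x, (χ₁ x - χ₂ x) ∂muI := by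
    have int₁' : Integrable (fun x => (1 - χ₁ x) * f x) muI :=
      intf _ (aemeasurable_const.sub (chi_aemeas hwm t₁))
        (fun x => ⟨by linarith [(hb₁ x).2], by linarith [(hb₁ x).1]⟩)
    have int₂' : Integrable (fun x => (1 - χ₂ x) * f x) muI :=
      intf _ (aemeasurable_const.sub (chi_aemeas hwm t₂))
        (fun x => ⟨by linarith [(hb₂ x).2], by linarith [(hb₂ x).1]⟩)
    have int₁'' : Integrable (fun x => 1 - χ₁ x) muI := (integrable_const 1).sub int₁
    have int₂'' : Integrable (fun x => 1 - χ₂ x) muI := (integrable_const 1).sub int₂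
    have e1 : (fun x => (χ₁ x - χ₂ x) * f x)
        = fun x => (1 - χ₂ x) * f x - (1 - χ₁ x) * f x := by
      funext x; ring
    have e2 : ∫ x, (χ₁ x - χ₂ x) ∂muI = (∫ x, (1 - χ₂ x) ∂muI) - ∫ x, (1 - χ₁ x) ∂muI := by
      have e3 : (fun x => χ₁ x - χ₂ x) = fun x => (1 - χ₂ x) - (1 - χ₁ x) := by
        funext x; ring
      rw [e3, integral_sub int₂'' int₁'']
    rw [e1, integral_sub int₂' int₁', e2, hm₁.2, hm₂.2]
    ring
  have hDzero : ∫ x, (χ₁ x - χ₂ x) ∂muI = 0 := by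
    have : (c₁ - c₂) * ∫ x, (χ₁ x - χ₂ x) ∂muI = 0 := by linarith [hD1, hD2]
    rcases mul_eq_zero.mp this with h | h
    · exact absurd (by linarith : c₁ = c₂) hne
    · exact h
  -- conclude S n is null
  have hδnn : 0 ≤ᵐ[muI] fun x => χ₁ x - χ₂ x := by
    refine Filter.Eventually.of_forall fun x => ?_
    show (0:ℝ) ≤ χ₁ x - χ₂ x
    by_cases h2 : t₂ < w x
    · have h1 : t₁ < w x := lt_of_le_of_lt ht₁₂ h2
      simp [hχ₁, hχ₂, h1, h2]
    · have : χ₂ x = 0 := by simp [hχ₂, h2]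
      rw [this]
      simpa using (hb₁ x).1
  have hδae := (MeasureTheory.integral_eq_zero_iff_of_nonneg_ae hδnn (int₁.sub int₂)).mp hDzero
  have hδnull : muI {x | ¬((fun x => χ₁ x - χ₂ x) x = 0)} = 0 := by
    have : (fun x => χ₁ x - χ₂ x) =ᵐ[muI] 0 := hδae
    exact MeasureTheory.ae_iff.mp this
  have hSsub : S n ⊆ {x | ¬((fun x => χ₁ x - χ₂ x) x = 0)} := by
    intro x hx
    obtain ⟨hx1, hx2⟩ := hx
    have h1 : t₁ < w x := lt_of_lt_of_le ht₁I.2 hx1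
    have h2 : ¬ t₂ < w x := by
      push_neg
      calc w x ≤ 1 - α := hx2
        _ ≤ t₂ := le_of_lt ht₂I.1
    simp only [mem_setOf_eq, hχ₁, hχ₂, if_pos h1, if_neg h2]
    norm_num
  exact hSn (measure_mono_null hSsub hδnull)

end core7

lemma muI_def : muI = volume.restrict (Ioo (0:ℝ) 1) := rfl

end Stmt18

open Stmt18


/-- Theorem 2: let `f ∈ BV(0,1)`, `0 ≤ f ≤ 1`, satisfy hypothesis (H): for
every `c ∈ (0,1)`, the topological boundary of `{x ∈ (0,1) ∖ J_f : f(x) = c}` is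
Lebesgue-null (here `J_f` is the set of discontinuity points of `f` in `(0,1)`). If
`(u, c₁, c₂)` minimizes `F` jointly over `u ∈ L²(0,1)` and constants `c₁, c₂ ∈ [0,1]`,
then either `u` is constant a.e. or `u` is a binary function a.e. -/
theorem stmt18 (lam : ℝ) (hlam : 0 < lam) (f : ℝ → ℝ)
    (hfBV : BoundedVariationOn f (Ioo 0 1))
    (hf01 : ∀ x ∈ Ioo (0:ℝ) 1, f x ∈ Icc (0:ℝ) 1)
    (hH : ∀ c ∈ Ioo (0:ℝ) 1,
      volume (frontier {x | x ∈ Ioo (0:ℝ) 1 ∧ ContinuousAt f x ∧ f x = c}) = 0)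
    (u : ℝ → ℝ) (c₁ c₂ : ℝ) (hc₁ : c₁ ∈ Icc (0:ℝ) 1) (hc₂ : c₂ ∈ Icc (0:ℝ) 1)
    (hu : MemLp u 2 (volume.restrict (Ioo (0:ℝ) 1)))
    (hmin : ∀ (u' : ℝ → ℝ) (d₁ d₂ : ℝ), MemLp u' 2 (volume.restrict (Ioo (0:ℝ) 1)) →
      d₁ ∈ Icc (0:ℝ) 1 → d₂ ∈ Icc (0:ℝ) 1 → Fcv lam f u c₁ c₂ ≤ Fcv lam f u' d₁ d₂) :
    (∃ k : ℝ, ∀ᵐ x ∂(volume.restrict (Ioo (0:ℝ) 1)), u x = k) ∨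
      (∀ᵐ x ∂(volume.restrict (Ioo (0:ℝ) 1)), u x = 0 ∨ u x = 1) := by
  classical
  have hfm : AEMeasurable f muI := fmeas hfBV
  have hf_ae := f_ae_mem hf01
  -- the fidelity lintegral for arbitrary coefficients is finite
  have hLfin : ∀ (v : ℝ → ℝ) (d₁ d₂ : ℝ), d₁ ∈ Icc (0:ℝ) 1 → d₂ ∈ Icc (0:ℝ) 1 →
      (∀ᵐ x ∂muI, v x ∈ Icc (0:ℝ) 1) →
      (∫⁻ x in Ioo (0:ℝ) 1,
        ENNReal.ofReal (v x * (d₁ - f x) ^ 2 + (1 - v x) * (d₂ - f x) ^ 2)) ≤ 1 := by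
    intro v d₁ d₂ hd₁ hd₂ hvb
    have hle : ∀ᵐ x ∂muI,
        ENNReal.ofReal (v x * (d₁ - f x) ^ 2 + (1 - v x) * (d₂ - f x) ^ 2) ≤ 1 := by
      filter_upwards [hf_ae, hvb] with x hx hvx
      rw [show (1:ℝ≥0∞) = ENNReal.ofReal 1 by simp]
      refine ENNReal.ofReal_le_ofReal ?_
      have ha : (d₁ - f x)^2 ≤ 1 := by nlinarith [hx.1, hx.2, hd₁.1, hd₁.2]
      have hb : (d₂ - f x)^2 ≤ 1 := by nlinarith [hx.1, hx.2, hd₂.1, hd₂.2]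
      have h1 := mul_le_mul_of_nonneg_left ha hvx.1
      have h2 := mul_le_mul_of_nonneg_left hb (by linarith [hvx.2] : (0:ℝ) ≤ 1 - v x)
      linarith
    calc (∫⁻ x in Ioo (0:ℝ) 1,
        ENNReal.ofReal (v x * (d₁ - f x) ^ 2 + (1 - v x) * (d₂ - f x) ^ 2))
        ≤ ∫⁻ _x in Ioo (0:ℝ) 1, 1 := lintegral_mono_ae hle
      _ = 1 := by
          rw [MeasureTheory.setLIntegral_const]
          rw [Real.volume_Ioo]
          norm_num
  -- Fcv of the zero function is finite
  have hF0 : Fcv lam f (fun _ => 0) 0 0 ≠ ⊤ := by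
    rw [Fcv]
    have h1 : eVariationOn (fun _ : ℝ => (0:ℝ)) (Ioo 0 1) = 0 := by
      apply eVariationOn.constant_on
      rintro x ⟨a, _, rfl⟩ y ⟨b, _, rfl⟩
      rfl
    have h2 : (∫⁻ x in Ioo (0:ℝ) 1, (if (fun _ : ℝ => (0:ℝ)) x ∈ Icc (0:ℝ) 1 then 0 else ⊤)) = 0 := by
      have h : ∀ x : ℝ, (if (fun _ : ℝ => (0:ℝ)) x ∈ Icc (0:ℝ) 1 then (0:ℝ≥0∞) else ⊤) = 0 :=
        fun x => if_pos (by constructor <;> norm_num)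
      simp only [h]
      simp
    rw [h1, h2]
    simp only [zero_add, add_zero]
    refine ENNReal.mul_ne_top ENNReal.ofReal_ne_top ?_
    refine ne_top_of_le_ne_top (by simp : (1:ℝ≥0∞) ≠ ⊤) ?_
    refine hLfin _ 0 0 (by constructor <;> norm_num) (by constructor <;> norm_num) ?_
    refine Filter.Eventually.of_forall fun x => ?_
    constructor <;> norm_num
  have hFu : Fcv lam f u c₁ c₂ ≠ ⊤ := by
    refine ne_top_of_le_ne_top hF0 ?_
    refine hmin (fun _ => 0) 0 0 ?_ (by constructor <;> norm_num) (by constructor <;> norm_num)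
    exact memLp_const 0
  have hVu : eVariationOn u (Ioo 0 1) ≠ ⊤ := by
    refine ne_top_of_le_ne_top hFu ?_
    rw [Fcv]
    exact le_add_right le_self_add
  have hind_fin : (∫⁻ x in Ioo (0:ℝ) 1, (if u x ∈ Icc (0:ℝ) 1 then 0 else ⊤)) ≠ ⊤ := by
    refine ne_top_of_le_ne_top hFu ?_
    rw [Fcv]
    exact le_add_right le_add_self
  -- u lies in [0,1] a.e.
  have hu01 : ∀ᵐ x ∂muI, u x ∈ Icc (0:ℝ) 1 := by
    obtain ⟨u₀, hu₀m, huu₀⟩ := hu.aestronglyMeasurable.aemeasurable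
    have hcongr : (∫⁻ x in Ioo (0:ℝ) 1, (if u x ∈ Icc (0:ℝ) 1 then 0 else ⊤))
        = ∫⁻ x in Ioo (0:ℝ) 1, (if u₀ x ∈ Icc (0:ℝ) 1 then 0 else ⊤) := by
      refine lintegral_congr_ae ?_
      have huu₀' : u =ᵐ[muI] u₀ := huu₀
      filter_upwards [huu₀'] with x hx
      rw [hx]
    set T : Set ℝ := {x | u₀ x ∉ Icc (0:ℝ) 1} with hT
    have hTm : MeasurableSet T := by
      have : T = (u₀ ⁻¹' (Icc (0:ℝ) 1))ᶜ := by
        ext x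
        simp [hT]
      rw [this]
      exact (hu₀m measurableSet_Icc).compl
    have hiT : (∫⁻ x in Ioo (0:ℝ) 1, (if u₀ x ∈ Icc (0:ℝ) 1 then 0 else ⊤))
        = ⊤ * muI T := by
      have heq : (fun x => if u₀ x ∈ Icc (0:ℝ) 1 then (0:ℝ≥0∞) else ⊤)
          = T.indicator (fun _ => ⊤) := by
        funext x
        by_cases hx : u₀ x ∈ Icc (0:ℝ) 1
        · rw [if_pos hx, indicator_of_notMem (by simpa [hT, mem_Icc] using hx)]
        · rw [if_neg hx, indicator_of_mem (by simpa [hT, mem_Icc] using hx)]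
      rw [show (∫⁻ x in Ioo (0:ℝ) 1, (if u₀ x ∈ Icc (0:ℝ) 1 then 0 else ⊤))
          = ∫⁻ x, (if u₀ x ∈ Icc (0:ℝ) 1 then 0 else ⊤) ∂muI from rfl]
      rw [heq, lintegral_indicator hTm, setLIntegral_const]
    have hTnull : muI T = 0 := by
      by_contra hTn
      rw [hcongr, hiT, ENNReal.top_mul hTn] at hind_fin
      exact hind_fin rfl
    have : ∀ᵐ x ∂muI, u₀ x ∈ Icc (0:ℝ) 1 := by
      rw [MeasureTheory.ae_iff]
      exact hTnull
    filter_upwards [this, (huu₀ : u =ᵐ[muI] u₀)] with x h1 h2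
    rw [h2]
    exact h1
  -- the clamped minimizer
  set w : ℝ → ℝ := fun x => max 0 (min (u x) 1) with hw
  have hwu : w =ᵐ[muI] u := by
    filter_upwards [hu01] with x hx
    rw [hw]
    show max 0 (min (u x) 1) = u x
    rw [min_eq_left hx.2, max_eq_right hx.1]
  have hwb : ∀ x, w x ∈ Icc (0:ℝ) 1 := fun x =>
    ⟨le_max_left _ _, max_le (by norm_num) (min_le_right _ _)⟩
  have hwm : AEStronglyMeasurable w muI := hu.aestronglyMeasurable.congr hwu.symm
  have hVw_le : eVariationOn w (Ioo 0 1) ≤ eVariationOn u (Ioo 0 1) := by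
    have h1 : eVariationOn (fun x => min (u x) 1) (Ioo 0 1) ≤ eVariationOn u (Ioo 0 1) :=
      evar_min_le u 1 _
    have h2 : eVariationOn (fun x => max (min (u x) 1) 0) (Ioo 0 1)
        ≤ eVariationOn (fun x => min (u x) 1) (Ioo 0 1) := evar_max_le _ 0 _
    have he : w = fun x => max (min (u x) 1) 0 := by
      funext x
      rw [hw]
      exact max_comm _ _
    rw [he]
    exact le_trans h2 h1
  have hVw : eVariationOn w (Ioo 0 1) ≠ ⊤ := ne_top_of_le_ne_top hVu hVw_le
  -- Fcv w ≤ Fcv u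
  have hFw_le_Fu : Fcv lam f w c₁ c₂ ≤ Fcv lam f u c₁ c₂ := by
    rw [Fcv, Fcv]
    refine add_le_add (add_le_add hVw_le ?_) ?_
    · have h : ∀ x : ℝ, (if w x ∈ Icc (0:ℝ) 1 then (0:ℝ≥0∞) else ⊤) = 0 :=
        fun x => if_pos (hwb x)
      simp only [h]
      simp
    · refine mul_le_mul_right (le_of_eq ?_) _
      refine lintegral_congr_ae ?_
      have hwu' : w =ᵐ[volume.restrict (Ioo (0:ℝ) 1)] u := hwu
      filter_upwards [hwu'] with x hx
      rw [hx]
  -- the real minimality property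
  have hEmin : ∀ v d₁ d₂, AEStronglyMeasurable v muI → (∀ x, v x ∈ Icc (0:ℝ) 1) →
      eVariationOn v (Ioo 0 1) ≠ ⊤ → d₁ ∈ Icc (0:ℝ) 1 → d₂ ∈ Icc (0:ℝ) 1 →
      EE lam f w c₁ c₂ ≤ EE lam f v d₁ d₂ := by
    intro v d₁ d₂ hvm hvb hvfin hd₁ hd₂
    have hFv : Fcv lam f v d₁ d₂ = ENNReal.ofReal (EE lam f v d₁ d₂) :=
      Fcv_eq_ofReal (le_of_lt hlam) hfm hf01 hvm hvb hvfin hd₁ hd₂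
    have hFw : Fcv lam f w c₁ c₂ = ENNReal.ofReal (EE lam f w c₁ c₂) :=
      Fcv_eq_ofReal (le_of_lt hlam) hfm hf01 hwm hwb hVw hc₁ hc₂
    have hvL2 : MemLp v 2 (volume.restrict (Ioo (0:ℝ) 1)) := by
      have : MemLp v 2 muI := by
        refine MemLp.of_bound hvm 1 ?_
        refine Filter.Eventually.of_forall fun x => ?_
        rw [Real.norm_eq_abs, abs_le]
        exact ⟨by linarith [(hvb x).1], (hvb x).2⟩
      exact this
    have hch : Fcv lam f w c₁ c₂ ≤ Fcv lam f v d₁ d₂ :=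
      le_trans hFw_le_Fu (hmin v d₁ d₂ hvL2 hd₁ hd₂)
    rw [hFw, hFv] at hch
    have hEEv : 0 ≤ EE lam f v d₁ d₂ := by
      rw [EE]
      have := fid_nonneg (f := f) (v := v) hvb (d₁ := d₁) (d₂ := d₂)
      positivity
    exact (ENNReal.ofReal_le_ofReal_iff hEEv).mp hch
  -- case split on c₁ = c₂
  by_cases hcc : c₁ = c₂
  · -- constant case
    left
    subst hcc
    have hfid_eq : ∀ (v : ℝ → ℝ), (∫⁻ x in Ioo (0:ℝ) 1,
        ENNReal.ofReal (v x * (c₁ - f x) ^ 2 + (1 - v x) * (c₁ - f x) ^ 2))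
        = ∫⁻ x in Ioo (0:ℝ) 1, ENNReal.ofReal ((c₁ - f x) ^ 2) := by
      intro v
      refine lintegral_congr fun x => ?_
      congr 1
      ring
    have hmin0 := hmin (fun _ => 0) c₁ c₁ (memLp_const 0) hc₁ hc₁
    rw [Fcv, Fcv] at hmin0
    rw [hfid_eq u, hfid_eq (fun _ => 0)] at hmin0
    have h1 : eVariationOn (fun _ : ℝ => (0:ℝ)) (Ioo 0 1) = 0 := by
      apply eVariationOn.constant_on
      rintro x ⟨a, _, rfl⟩ y ⟨b, _, rfl⟩
      rfl
    have h2 : (∫⁻ x in Ioo (0:ℝ) 1,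
        (if (fun _ : ℝ => (0:ℝ)) x ∈ Icc (0:ℝ) 1 then 0 else ⊤)) = 0 := by
      have h : ∀ x : ℝ, (if (fun _ : ℝ => (0:ℝ)) x ∈ Icc (0:ℝ) 1 then (0:ℝ≥0∞) else ⊤) = 0 :=
        fun x => if_pos (by constructor <;> norm_num)
      simp only [h]
      simp
    rw [h1, h2] at hmin0
    simp only [zero_add] at hmin0
    set L := ENNReal.ofReal lam * ∫⁻ x in Ioo (0:ℝ) 1, ENNReal.ofReal ((c₁ - f x) ^ 2) with hL
    have hLne : L ≠ ⊤ := by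
      rw [hL]
      refine ENNReal.mul_ne_top ENNReal.ofReal_ne_top ?_
      refine ne_top_of_le_ne_top (by simp : (1:ℝ≥0∞) ≠ ⊤) ?_
      have := hLfin (fun _ => 0) c₁ c₁ hc₁ hc₁
        (Filter.Eventually.of_forall fun x => by constructor <;> norm_num)
      rw [hfid_eq (fun _ => 0)] at this
      exact this
    have hkey : eVariationOn u (Ioo 0 1)
        + (∫⁻ x in Ioo (0:ℝ) 1, (if u x ∈ Icc (0:ℝ) 1 then 0 else ⊤)) ≤ 0 := by
      have hmin0' : (eVariationOn u (Ioo 0 1)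
          + ∫⁻ x in Ioo (0:ℝ) 1, (if u x ∈ Icc (0:ℝ) 1 then 0 else ⊤)) + L ≤ 0 + L := by
        rw [zero_add]
        exact hmin0
      exact (ENNReal.add_le_add_iff_right hLne).mp hmin0'
    have hVar0 : eVariationOn u (Ioo 0 1) = 0 := by
      have : eVariationOn u (Ioo 0 1) ≤ 0 := le_trans le_self_add hkey
      exact le_antisymm this zero_le
    have hconst := (eVariationOn.eq_zero_iff u).mp hVar0
    refine ⟨u (1/2), ?_⟩
    have hhalf : (1/2 : ℝ) ∈ Ioo (0:ℝ) 1 := by constructor <;> norm_num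
    have : ∀ x ∈ Ioo (0:ℝ) 1, u x = u (1/2) := by
      intro x hx
      have := hconst x hx (1/2) hhalf
      exact edist_eq_zero.mp this
    filter_upwards [ae_restrict_mem measurableSet_Ioo] with x hx
    exact this x hx
  · -- binary case
    right
    have hae_w := core_ne hEmin hlam hfm hf01 hwm hwb hVw hc₁ hc₂ hcc
    have hwu' : w =ᵐ[volume.restrict (Ioo (0:ℝ) 1)] u := hwu
    have hae_w' : ∀ᵐ x ∂(volume.restrict (Ioo (0:ℝ) 1)), w x = 0 ∨ w x = 1 := hae_w
    filter_upwards [hae_w', hwu'] with x h1 h2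
    rw [← h2]
    exact h1
end
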